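/- arXiv:1607.02534 — 5 statements merged into one kernel-verified Lean document; each statement's English description precedes it below -/
import Mathlib

section
/- Suppose u, v are Schwartz functions on ℝ. Then the quadratic term of the transmission coefficient expansion, T₂(z) = ∫∫_{x < y} e^{2iz(y-x)} u(y) conj(v(x)) dx dy, defined for Im z > 0, equals i ∫_ℝ (2z + ξ)^{-1} û(ξ) conj(v̂(ξ)) dξ, where û denotes the (unitary) Fourier transform. -/
open MeasureTheory Complex
open Set
open scoped FourierTransform Real
set_option maxHeartbeats 1000000
set_option linter.unreachableTactic false
set_option linter.unusedTactic false

/-- The unitary Fourier transform `û(ξ) = (2π)^{-1/2} ∫ u(x) e^{-ixξ} dx`. -/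
noncomputable def unitaryFT (u : ℝ → ℂ) (ξ : ℝ) : ℂ :=
  ((Real.sqrt (2 * Real.pi) : ℝ) : ℂ)⁻¹ *
    ∫ x : ℝ, Complex.exp (-(Complex.I * (x : ℂ) * (ξ : ℂ))) * u x



lemma exp_integrableOn_Iic {c : ℂ} (hc : 0 < c.re) (a : ℝ) :
    IntegrableOn (fun x : ℝ => Complex.exp (c * x)) (Iic a) := by
  have hre : IntegrableOn (fun x : ℝ => Real.exp (c.re * x)) (Iic a) := by
    have A : IntegrableOn (fun x : ℝ => Real.exp (-c.re * x)) (Ioi (-a)) :=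
      exp_neg_integrableOn_Ioi _ hc
    have A' : Integrable ((Ioi (-a)).indicator fun x : ℝ => Real.exp (-c.re * x)) := by
      rwa [integrable_indicator_iff measurableSet_Ioi]
    have B := A'.comp_neg
    have hfun : (fun x : ℝ => ((Ioi (-a)).indicator fun x : ℝ => Real.exp (-c.re * x)) (-x))
        = (Iio a).indicator fun x : ℝ => Real.exp (c.re * x) := by
      funext x
      by_cases h : x < a <;>
        simp [Set.indicator_apply, h, neg_lt, mul_comm, lt_neg] <;> ring_nf
    rw [hfun] at B
    have h2 : IntegrableOn (fun x : ℝ => Real.exp (c.re * x)) (Iio a) :=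
      (integrable_indicator_iff measurableSet_Iio).1 B
    rwa [IntegrableOn, Measure.restrict_congr_set Iio_ae_eq_Iic] at h2
  refine (hre.mono' ?_ ?_)
  · exact (Complex.continuous_exp.comp (by fun_prop)).aestronglyMeasurable
  · filter_upwards with x
    rw [Complex.norm_exp]
    simp [Complex.mul_re]

lemma exp_integral_Iic {c : ℂ} (hc : 0 < c.re) (a : ℝ) :
    ∫ x in Iic a, Complex.exp (c * x) = Complex.exp (c * a) / c := by
  have hc0 : c ≠ 0 := fun h => by simp [h] at hc
  have h1 : Filter.Tendsto (fun b : ℝ => ∫ x in b..a, Complex.exp (c * x)) Filter.atBot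
      (nhds (∫ x in Iic a, Complex.exp (c * x))) :=
    intervalIntegral_tendsto_integral_Iic _ (exp_integrableOn_Iic hc a) Filter.tendsto_id
  have h2 : Filter.Tendsto (fun b : ℝ => ∫ x in b..a, Complex.exp (c * x)) Filter.atBot
      (nhds (Complex.exp (c * a) / c)) := by
    simp_rw [integral_exp_mul_complex hc0]
    have hb : Filter.Tendsto (fun b : ℝ => Complex.exp (c * b)) Filter.atBot (nhds 0) := by
      rw [tendsto_zero_iff_norm_tendsto_zero]
      have : ∀ b : ℝ, ‖Complex.exp (c * b)‖ = Real.exp (c.re * b) := by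
        intro b; rw [Complex.norm_exp]; simp [Complex.mul_re]
      simp_rw [this]
      exact Real.tendsto_exp_atBot.comp (Filter.tendsto_id.const_mul_atBot hc)
    have := (Filter.Tendsto.const_sub (Complex.exp (c * a)) hb).div_const c
    simpa using this
  exact tendsto_nhds_unique h1 h2

lemma real_exp_integral_Iic {b : ℝ} (hb : 0 < b) (a : ℝ) :
    ∫ x in Iic a, Real.exp (b * x) = Real.exp (b * a) / b := by
  have hbc : (0:ℝ) < ((b : ℂ)).re := by simpa using hb
  have hval := exp_integral_Iic (c := (b : ℂ)) hbc a
  have hint := exp_integrableOn_Iic (c := (b : ℂ)) hbc a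
  have hre : ∫ x in Iic a, (Complex.exp ((b:ℂ) * x)).re = (∫ x in Iic a, Complex.exp ((b:ℂ) * x)).re := by
    simpa [RCLike.re_to_complex] using integral_re hint
  have e1 : ∀ x : ℝ, (Complex.exp ((b:ℂ) * x)).re = Real.exp (b * x) := by
    intro x
    rw [show ((b:ℂ) * x) = ((b * x : ℝ) : ℂ) by push_cast; ring]
    exact Complex.exp_ofReal_re _
  calc ∫ x in Iic a, Real.exp (b * x) = ∫ x in Iic a, (Complex.exp ((b:ℂ) * x)).re := by
        congr 1; funext x; rw [e1]
    _ = (∫ x in Iic a, Complex.exp ((b:ℂ) * x)).re := hre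
    _ = Real.exp (b * a) / b := by
        rw [hval]
        have : Complex.exp ((b:ℂ) * a) / (b:ℂ) = ((Real.exp (b * a) / b : ℝ) : ℂ) := by
          rw [show ((b:ℂ) * a) = ((b * a : ℝ) : ℂ) by push_cast; ring, ← Complex.ofReal_exp]
          push_cast; ring
        rw [this, Complex.ofReal_re]

lemma twopi_ne : ((2 * Real.pi : ℝ) : ℂ) ≠ 0 := by simp [Real.pi_ne_zero]

lemma unitaryFT_eq (f : ℝ → ℂ) (ξ : ℝ) :
    unitaryFT f ξ = ((Real.sqrt (2 * Real.pi) : ℝ) : ℂ)⁻¹ * 𝓕 f (ξ / (2 * Real.pi)) := by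
  rw [unitaryFT, Real.fourier_eq']
  congr 1
  refine integral_congr_ae (Filter.Eventually.of_forall fun v => ?_)
  dsimp only
  rw [smul_eq_mul]
  congr 2
  simp only [RCLike.inner_apply, conj_trivial]
  have hπc : ((Real.pi : ℝ) : ℂ) ≠ 0 := by exact_mod_cast Real.pi_ne_zero
  push_cast
  field_simp

lemma unitaryFT_cont (v : SchwartzMap ℝ ℂ) : Continuous (unitaryFT (⇑v)) := by
  have h : unitaryFT (⇑v) = fun ξ => ((Real.sqrt (2 * Real.pi) : ℝ) : ℂ)⁻¹ *
      (SchwartzMap.fourierTransformCLM ℂ v) (ξ / (2 * Real.pi)) := by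
    funext ξ; rw [unitaryFT_eq]; simp [SchwartzMap.fourier_coe]
  rw [h]
  exact continuous_const.mul ((SchwartzMap.fourierTransformCLM ℂ v).continuous.comp
    (continuous_id.div_const _))

lemma unitaryFT_integrable (v : SchwartzMap ℝ ℂ) : Integrable (unitaryFT (⇑v)) := by
  have h : unitaryFT (⇑v) = fun ξ => ((Real.sqrt (2 * Real.pi) : ℝ) : ℂ)⁻¹ *
      (SchwartzMap.fourierTransformCLM ℂ v) (ξ / (2 * Real.pi)) := by
    funext ξ; rw [unitaryFT_eq]; simp [SchwartzMap.fourier_coe]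
  rw [h]
  exact (((SchwartzMap.fourierTransformCLM ℂ v).integrable.comp_div
    (by positivity : (0:ℝ) < 2 * Real.pi).ne').const_mul _)

lemma unitary_inversion (v : SchwartzMap ℝ ℂ) (x : ℝ) :
    v x = ((Real.sqrt (2 * Real.pi) : ℝ) : ℂ)⁻¹ *
      ∫ ξ : ℝ, Complex.exp (Complex.I * x * ξ) * unitaryFT (⇑v) ξ := by
  have hπ : (0:ℝ) < 2 * Real.pi := by positivity
  set c : ℂ := ((Real.sqrt (2 * Real.pi) : ℝ) : ℂ)⁻¹ with hc
  have hinv : 𝓕⁻ (𝓕 ⇑v) x = v x := by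
    rw [Continuous.fourierInv_fourier_eq v.continuous v.integrable
      (by simpa [SchwartzMap.fourier_coe] using (SchwartzMap.fourierTransformCLM ℂ v).integrable)]
  set G : ℝ → ℂ := fun w => Complex.exp (Complex.I * x * ((2 * Real.pi : ℝ) * w)) * 𝓕 (⇑v) w with hG
  have h1 : ∀ ξ : ℝ, Complex.exp (Complex.I * x * ξ) * unitaryFT (⇑v) ξ
      = c * G (ξ / (2 * Real.pi)) := by
    intro ξ
    rw [unitaryFT_eq, hG]
    dsimp only
    have he : Complex.I * x * ((2 * Real.pi : ℝ) * ((ξ / (2 * Real.pi) : ℝ) : ℂ))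
        = Complex.I * x * ξ := by
      have h2 : ((2 * Real.pi : ℝ) : ℂ) * ((ξ / (2 * Real.pi) : ℝ) : ℂ) = (ξ : ℂ) := by
        rw [← Complex.ofReal_mul, mul_div_cancel₀ _ hπ.ne']
      rw [mul_assoc, h2, ← mul_assoc]
    push_cast at he ⊢
    rw [he]
    ring
  calc (v x : ℂ) = 𝓕⁻ (𝓕 ⇑v) x := hinv.symm
    _ = ∫ w, G w := by
        rw [Real.fourierInv_eq']
        refine integral_congr_ae (Filter.Eventually.of_forall fun w => ?_)
        dsimp only
        rw [smul_eq_mul, hG]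
        congr 2
        simp only [RCLike.inner_apply, conj_trivial]
        push_cast; ring
    _ = c * ∫ ξ : ℝ, Complex.exp (Complex.I * x * ξ) * unitaryFT (⇑v) ξ := by
        simp_rw [h1]
        rw [integral_const_mul, Measure.integral_comp_div G (2 * Real.pi),
          abs_of_pos hπ, real_smul]
        have hsne : ((Real.sqrt (2 * Real.pi) : ℝ) : ℂ) ≠ 0 := by
          simp [Real.sqrt_ne_zero', Real.pi_pos]
        have hone : c * (c * ((2 * Real.pi : ℝ) : ℂ)) = 1 := by
          rw [hc, ← mul_assoc, ← mul_inv, ← Complex.ofReal_mul,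
            Real.mul_self_sqrt hπ.le, inv_mul_cancel₀ twopi_ne]
        calc ∫ w, G w = (c * (c * ((2 * Real.pi : ℝ) : ℂ))) * ∫ w, G w := by
              rw [hone, one_mul]
          _ = c * (c * (((2 * Real.pi : ℝ) : ℂ) * ∫ w, G w)) := by ring

lemma conj_inversion (v : SchwartzMap ℝ ℂ) (x : ℝ) :
    (starRingEnd ℂ) (v x) = ((Real.sqrt (2 * Real.pi) : ℝ) : ℂ)⁻¹ *
      ∫ ξ : ℝ, Complex.exp (-(Complex.I * x * ξ)) * (starRingEnd ℂ) (unitaryFT (⇑v) ξ) := by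
  have h := congrArg (starRingEnd ℂ) (unitary_inversion v x)
  rw [map_mul] at h
  rw [h]
  congr 1
  · simp [map_inv₀, Complex.conj_ofReal]
  · rw [← integral_conj]
    refine integral_congr_ae (Filter.Eventually.of_forall fun ξ => ?_)
    dsimp only
    rw [map_mul, ← Complex.exp_conj]
    congr 2
    simp [map_mul, Complex.conj_I, Complex.conj_ofReal]


lemma norm_exp_factor (z : ℂ) (x y : ℝ) :
    ‖Complex.exp (2 * Complex.I * z * ((y:ℂ) - (x:ℂ)))‖
      = Real.exp ((2 * z.im) * x) * Real.exp (-(2 * z.im) * y) := by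
  rw [Complex.norm_exp, ← Real.exp_add]
  congr 1
  simp [Complex.mul_re, Complex.mul_im, Complex.sub_re, Complex.sub_im]
  ring

lemma re_neg_two_I_z {z : ℂ} (hz : 0 < z.im) : 0 < (-(2 * Complex.I * z)).re := by
  simp [Complex.mul_re]
  linarith

lemma key_integrable (u : SchwartzMap ℝ ℂ) {z : ℂ} (hz : 0 < z.im) {φ : ℝ → ℂ}
    (hφc : Continuous φ) (hφ : ∀ x, ‖φ x‖ = 1) :
    Integrable (fun p : ℝ × ℝ =>
        Complex.exp (2 * Complex.I * z * ((p.2 : ℂ) - (p.1 : ℂ))) * u p.2 * φ p.1)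
      (volume.restrict {p : ℝ × ℝ | p.1 < p.2}) := by
  set b : ℝ := 2 * z.im with hb
  have hbpos : 0 < b := by positivity
  set S : Set (ℝ × ℝ) := {p : ℝ × ℝ | p.1 < p.2} with hSdef
  have hS : MeasurableSet S := (isOpen_lt continuous_fst continuous_snd).measurableSet
  set F : ℝ × ℝ → ℂ := fun p =>
    Complex.exp (2 * Complex.I * z * ((p.2 : ℂ) - (p.1 : ℂ))) * u p.2 * φ p.1 with hF
  have hFc : Continuous F := by
    apply Continuous.mul
    apply Continuous.mul
    · exact Complex.continuous_exp.comp (by fun_prop)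
    · exact u.continuous.comp continuous_snd
    · exact hφc.comp continuous_fst
  have hsec : ∀ y : ℝ, (fun x => S.indicator F (x, y)) = (Iio y).indicator fun x => F (x, y) := by
    intro y; funext x
    by_cases h : x < y <;> simp [Set.indicator_apply, hSdef, h]
  have hnorm : ∀ x y : ℝ, ‖F (x, y)‖ = (Real.exp (-b * y) * ‖u y‖) * Real.exp (b * x) := by
    intro x y
    rw [hF]
    simp only [norm_mul, hφ, mul_one, norm_exp_factor]
    ring
  have hsecInt : ∀ y : ℝ, Integrable fun x => S.indicator F (x, y) := by
    intro y
    rw [hsec y, integrable_indicator_iff measurableSet_Iio]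
    have h0 : IntegrableOn (fun x : ℝ => Complex.exp ((-(2 * Complex.I * z)) * x)) (Iio y) :=
      (exp_integrableOn_Iic (re_neg_two_I_z hz) y).mono_set Iio_subset_Iic_self
    refine Integrable.mono' (((h0.norm.const_mul (Real.exp (-b*y) * ‖u y‖))))
      (hFc.comp (Continuous.prodMk_left y)).aestronglyMeasurable
      (Filter.Eventually.of_forall fun x => ?_)
    rw [hnorm x y]
    have : ‖Complex.exp ((-(2 * Complex.I * z)) * x)‖ = Real.exp (b * x) := by
      rw [Complex.norm_exp]
      congr 1
      simp [Complex.mul_re, hb]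
    rw [this]
  have main : Integrable (S.indicator F) ((volume : Measure ℝ).prod volume) := by
    refine (integrable_prod_iff' ?_).2 ⟨?_, ?_⟩
    · have h := hFc.aestronglyMeasurable.indicator (μ := volume) hS
      rwa [Measure.volume_eq_prod (α := ℝ) (β := ℝ)] at h
    · exact Filter.Eventually.of_forall hsecInt
    · have heq : ∀ y : ℝ, (∫ x, ‖S.indicator F (x, y)‖) = ‖u y‖ / b := by
        intro y
        have h1 : (fun x => ‖S.indicator F (x, y)‖)
            = (Iio y).indicator fun x => ‖F (x, y)‖ := by
          funext x
          by_cases h : x < y <;> simp [Set.indicator_apply, hSdef, h]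
        rw [h1, integral_indicator measurableSet_Iio,
          setIntegral_congr_set Iio_ae_eq_Iic]
        have h2 : ∀ x : ℝ, ‖F (x, y)‖ = (Real.exp (-b * y) * ‖u y‖) * Real.exp (b * x) :=
          fun x => hnorm x y
        calc (∫ x in Iic y, ‖F (x, y)‖)
            = ∫ x in Iic y, (Real.exp (-b * y) * ‖u y‖) * Real.exp (b * x) := by
              exact setIntegral_congr_fun measurableSet_Iic fun x _ => h2 x
          _ = (Real.exp (-b * y) * ‖u y‖) * ∫ x in Iic y, Real.exp (b * x) := by
              rw [integral_const_mul]
          _ = ‖u y‖ / b := by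
              rw [real_exp_integral_Iic hbpos y, neg_mul, Real.exp_neg]
              field_simp
      have : (fun y => ∫ x, ‖S.indicator F (x, y)‖) = fun y => ‖u y‖ / b := funext heq
      rw [this]
      exact u.integrable.norm.div_const b
  have main2 : Integrable (S.indicator F) (volume : Measure (ℝ × ℝ)) := by
    rwa [Measure.volume_eq_prod]
  exact (integrable_indicator_iff hS).1 main2

lemma norm_exp_unim (x ξ : ℝ) : ‖Complex.exp (-(Complex.I * (x:ℂ) * (ξ:ℂ)))‖ = 1 := by
  rw [Complex.norm_exp]
  simp [Complex.mul_re]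

lemma inner_eval (u : SchwartzMap ℝ ℂ) {z : ℂ} (hz : 0 < z.im) (ξ : ℝ) :
    (∫ p in {p : ℝ × ℝ | p.1 < p.2},
        Complex.exp (2 * Complex.I * z * ((p.2 : ℂ) - (p.1 : ℂ))) * u p.2
          * Complex.exp (-(Complex.I * (p.1 : ℂ) * (ξ : ℂ))))
      = Complex.I * (2 * z + (ξ:ℂ))⁻¹ * ((Real.sqrt (2 * Real.pi) : ℝ) : ℂ)
          * unitaryFT (⇑u) ξ := by
  set S : Set (ℝ × ℝ) := {p : ℝ × ℝ | p.1 < p.2} with hSdef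
  have hS : MeasurableSet S := (isOpen_lt continuous_fst continuous_snd).measurableSet
  set c₂ : ℂ := -(Complex.I * (2 * z + (ξ:ℂ))) with hc₂
  have hc₂re : 0 < c₂.re := by
    rw [hc₂]
    simp [Complex.mul_re]
    linarith
  have hc₂ne : c₂ ≠ 0 := by
    intro h; rw [h] at hc₂re; simp at hc₂re
  set F : ℝ × ℝ → ℂ := fun p =>
    Complex.exp (2 * Complex.I * z * ((p.2 : ℂ) - (p.1 : ℂ))) * u p.2
      * Complex.exp (-(Complex.I * (p.1 : ℂ) * (ξ : ℂ))) with hF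
  have hφc : Continuous fun x : ℝ => Complex.exp (-(Complex.I * (x:ℂ) * (ξ:ℂ))) :=
    Complex.continuous_exp.comp (by fun_prop)
  have hInt : Integrable F (volume.restrict S) :=
    key_integrable u hz (φ := fun x : ℝ => Complex.exp (-(Complex.I * (x:ℂ) * (ξ:ℂ)))) hφc
      (fun x => norm_exp_unim x ξ)
  have hIndInt : Integrable (S.indicator F) ((volume : Measure ℝ).prod volume) := by
    have h := (integrable_indicator_iff hS).2 hInt
    rwa [Measure.volume_eq_prod (α := ℝ) (β := ℝ)] at h
  have hinner : ∀ y : ℝ, (∫ x, S.indicator F (x, y)) = u y * Complex.exp (-(Complex.I * (y:ℂ) * (ξ:ℂ))) * c₂⁻¹ := by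
    intro y
    have hsec : (fun x => S.indicator F (x, y)) = (Iio y).indicator fun x => F (x, y) := by
      funext x
      by_cases h : x < y <;> simp [Set.indicator_apply, hSdef, h]
    rw [hsec, integral_indicator measurableSet_Iio, setIntegral_congr_set Iio_ae_eq_Iic]
    have hpt : ∀ x : ℝ, F (x, y)
        = (Complex.exp (2 * Complex.I * z * (y:ℂ)) * u y) * Complex.exp (c₂ * x) := by
      intro x
      rw [hF]
      dsimp only
      rw [mul_right_comm, ← Complex.exp_add,
        show (2 * Complex.I * z * ((y:ℂ) - (x:ℂ)) + -(Complex.I * (x:ℂ) * (ξ:ℂ)))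
          = 2 * Complex.I * z * (y:ℂ) + c₂ * (x:ℂ) from by rw [hc₂]; ring,
        Complex.exp_add]
      ring
    calc (∫ x in Iic y, F (x, y))
        = ∫ x in Iic y, (Complex.exp (2 * Complex.I * z * (y:ℂ)) * u y) * Complex.exp (c₂ * x) :=
          setIntegral_congr_fun measurableSet_Iic fun x _ => hpt x
      _ = (Complex.exp (2 * Complex.I * z * (y:ℂ)) * u y) * ∫ x in Iic y, Complex.exp (c₂ * x) := by
          rw [integral_const_mul]
      _ = (Complex.exp (2 * Complex.I * z * (y:ℂ)) * u y) * (Complex.exp (c₂ * y) / c₂) := by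
          rw [exp_integral_Iic hc₂re y]
      _ = u y * Complex.exp (-(Complex.I * (y:ℂ) * (ξ:ℂ))) * c₂⁻¹ := by
          rw [div_eq_mul_inv, ← mul_assoc]
          congr 1
          rw [mul_comm, ← mul_assoc, ← Complex.exp_add,
            show c₂ * (y:ℂ) + 2 * Complex.I * z * (y:ℂ) = -(Complex.I * (y:ℂ) * (ξ:ℂ)) from by
              rw [hc₂]; ring]
          ring
  have hsqne : ((Real.sqrt (2 * Real.pi) : ℝ) : ℂ) ≠ 0 := by
    simp [Real.sqrt_ne_zero', Real.pi_pos]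
  have hintval : (∫ y : ℝ, Complex.exp (-(Complex.I * (y:ℂ) * (ξ:ℂ))) * u y)
      = ((Real.sqrt (2 * Real.pi) : ℝ) : ℂ) * unitaryFT (⇑u) ξ := by
    rw [unitaryFT, ← mul_assoc, mul_inv_cancel₀ hsqne, one_mul]
  calc (∫ p in S, F p) = ∫ p, S.indicator F p := (integral_indicator hS).symm
    _ = ∫ p, S.indicator F p ∂((volume : Measure ℝ).prod volume) := by
        rw [Measure.volume_eq_prod (α := ℝ) (β := ℝ)]
    _ = ∫ y : ℝ, ∫ x : ℝ, S.indicator F (x, y) := integral_prod_symm _ hIndInt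
    _ = ∫ y : ℝ, u y * Complex.exp (-(Complex.I * (y:ℂ) * (ξ:ℂ))) * c₂⁻¹ := by
        refine integral_congr_ae (Filter.Eventually.of_forall fun y => ?_)
        exact hinner y
    _ = (∫ y : ℝ, u y * Complex.exp (-(Complex.I * (y:ℂ) * (ξ:ℂ)))) * c₂⁻¹ := by
        rw [integral_mul_const]
    _ = (∫ y : ℝ, Complex.exp (-(Complex.I * (y:ℂ) * (ξ:ℂ))) * u y) * c₂⁻¹ := by
        congr 1
        exact integral_congr_ae (Filter.Eventually.of_forall fun y => mul_comm _ _)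
    _ = Complex.I * (2 * z + (ξ:ℂ))⁻¹ * ((Real.sqrt (2 * Real.pi) : ℝ) : ℂ) * unitaryFT (⇑u) ξ := by
        rw [hintval]
        have hcinv : c₂⁻¹ = Complex.I * (2 * z + (ξ:ℂ))⁻¹ := by
          rw [hc₂, inv_neg, mul_inv, Complex.inv_I]
          ring
        rw [hcinv]
        ring


/-- For Schwartz functions `u, v` and `Im z > 0`, the quadratic term of the
transmission coefficient expansion
`T₂(z) = ∫∫_{x<y} e^{2iz(y−x)} u(y) conj(v(x)) dx dy`
equals `i ∫ (2z+ξ)⁻¹ û(ξ) conj(v̂(ξ)) dξ`, with the unitary Fourier transform. -/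
theorem stmt_1 (u v : SchwartzMap ℝ ℂ) (z : ℂ) (hz : 0 < z.im) :
    (∫ p in {p : ℝ × ℝ | p.1 < p.2},
        Complex.exp (2 * Complex.I * z * ((p.2 : ℂ) - (p.1 : ℂ))) * u p.2
          * (starRingEnd ℂ) (v p.1))
      = Complex.I *
          ∫ ξ : ℝ, (2 * z + (ξ : ℂ))⁻¹ * unitaryFT (⇑u) ξ
            * (starRingEnd ℂ) (unitaryFT (⇑v) ξ) := by
  set sq : ℂ := ((Real.sqrt (2 * Real.pi) : ℝ) : ℂ) with hsq
  have hsqne : sq ≠ 0 := by simp [hsq, Real.sqrt_ne_zero', Real.pi_pos]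
  set S : Set (ℝ × ℝ) := {p : ℝ × ℝ | p.1 < p.2} with hSdef
  have hS : MeasurableSet S := (isOpen_lt continuous_fst continuous_snd).measurableSet
  set E : ℝ × ℝ → ℂ := fun p =>
    Complex.exp (2 * Complex.I * z * ((p.2 : ℂ) - (p.1 : ℂ))) * u p.2 with hE
  have hEc : Continuous E := by
    apply Continuous.mul
    · exact Complex.continuous_exp.comp (by fun_prop)
    · exact u.continuous.comp continuous_snd
  have hEint : Integrable E (volume.restrict S) := by
    have h := key_integrable u hz (φ := fun _ : ℝ => (1:ℂ)) continuous_const (fun _ => by simp)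
    simpa using h
  -- Step 1-3 : insert inversion and pull out the constant
  have step1 : (∫ p in S, E p * (starRingEnd ℂ) (v p.1))
      = sq⁻¹ * ∫ p in S, ∫ ξ : ℝ,
          E p * (Complex.exp (-(Complex.I * (p.1:ℂ) * (ξ:ℂ)))
            * (starRingEnd ℂ) (unitaryFT (⇑v) ξ)) := by
    rw [← integral_const_mul]
    refine integral_congr_ae (Filter.Eventually.of_forall fun p => ?_)
    dsimp only
    rw [conj_inversion v p.1]
    rw [← hsq, ← integral_const_mul]
    rw [integral_const_mul, integral_const_mul]
    ring
  -- Step 4 : Fubini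
  have hswap : Integrable (Function.uncurry fun (p : ℝ × ℝ) (ξ : ℝ) =>
      E p * (Complex.exp (-(Complex.I * (p.1:ℂ) * (ξ:ℂ)))
        * (starRingEnd ℂ) (unitaryFT (⇑v) ξ))) ((volume.restrict S).prod volume) := by
    have hbound : Integrable (fun q : (ℝ × ℝ) × ℝ => ‖E q.1‖ * ‖unitaryFT (⇑v) q.2‖)
        ((volume.restrict S).prod volume) :=
      hEint.norm.mul_prod (unitaryFT_integrable v).norm
    have hmeas : Continuous (Function.uncurry fun (p : ℝ × ℝ) (ξ : ℝ) =>
        E p * (Complex.exp (-(Complex.I * (p.1:ℂ) * (ξ:ℂ)))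
          * (starRingEnd ℂ) (unitaryFT (⇑v) ξ))) := by
      apply Continuous.mul
      · exact hEc.comp continuous_fst
      · apply Continuous.mul
        · exact Complex.continuous_exp.comp (by fun_prop)
        · exact continuous_conj.comp ((unitaryFT_cont v).comp continuous_snd)
    refine hbound.mono' hmeas.aestronglyMeasurable
      (Filter.Eventually.of_forall fun q => ?_)
    simp [Function.uncurry, norm_mul, RCLike.norm_conj]
    have h1 : ‖Complex.exp (-(Complex.I * ((q.1.1:ℝ):ℂ) * ((q.2:ℝ):ℂ)))‖ = 1 :=
      norm_exp_unim q.1.1 q.2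
    rw [h1, one_mul]
  have step2 : (∫ p in S, ∫ ξ : ℝ,
        E p * (Complex.exp (-(Complex.I * (p.1:ℂ) * (ξ:ℂ)))
          * (starRingEnd ℂ) (unitaryFT (⇑v) ξ)))
      = ∫ ξ : ℝ, ∫ p in S,
          E p * (Complex.exp (-(Complex.I * (p.1:ℂ) * (ξ:ℂ)))
            * (starRingEnd ℂ) (unitaryFT (⇑v) ξ)) :=
    integral_integral_swap hswap
  -- Step 5 : evaluate inner integral
  have step3 : ∀ ξ : ℝ, (∫ p in S,
        E p * (Complex.exp (-(Complex.I * (p.1:ℂ) * (ξ:ℂ)))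
          * (starRingEnd ℂ) (unitaryFT (⇑v) ξ)))
      = (sq * Complex.I) * ((2 * z + (ξ:ℂ))⁻¹ * unitaryFT (⇑u) ξ
          * (starRingEnd ℂ) (unitaryFT (⇑v) ξ)) := by
    intro ξ
    have h1 : (∫ p in S,
        E p * (Complex.exp (-(Complex.I * (p.1:ℂ) * (ξ:ℂ)))
          * (starRingEnd ℂ) (unitaryFT (⇑v) ξ)))
        = (∫ p in S, E p * Complex.exp (-(Complex.I * (p.1:ℂ) * (ξ:ℂ))))
            * (starRingEnd ℂ) (unitaryFT (⇑v) ξ) := by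
      rw [← integral_mul_const]
      exact integral_congr_ae (Filter.Eventually.of_forall fun p => by dsimp only; ring)
    rw [h1]
    have h2 := inner_eval u hz ξ
    rw [← hSdef] at h2
    simp only [hE]
    rw [h2, ← hsq]
    ring
  calc (∫ p in S, E p * (starRingEnd ℂ) (v p.1))
      = sq⁻¹ * ∫ p in S, ∫ ξ : ℝ,
          E p * (Complex.exp (-(Complex.I * (p.1:ℂ) * (ξ:ℂ)))
            * (starRingEnd ℂ) (unitaryFT (⇑v) ξ)) := step1
    _ = sq⁻¹ * ∫ ξ : ℝ, ∫ p in S,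
          E p * (Complex.exp (-(Complex.I * (p.1:ℂ) * (ξ:ℂ)))
            * (starRingEnd ℂ) (unitaryFT (⇑v) ξ)) := by rw [step2]
    _ = sq⁻¹ * ∫ ξ : ℝ, (sq * Complex.I) * ((2 * z + (ξ:ℂ))⁻¹ * unitaryFT (⇑u) ξ
          * (starRingEnd ℂ) (unitaryFT (⇑v) ξ)) := by
        congr 1
        exact integral_congr_ae (Filter.Eventually.of_forall fun ξ => step3 ξ)
    _ = sq⁻¹ * ((sq * Complex.I) * ∫ ξ : ℝ, (2 * z + (ξ:ℂ))⁻¹ * unitaryFT (⇑u) ξ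
          * (starRingEnd ℂ) (unitaryFT (⇑v) ξ)) := by rw [integral_const_mul]
    _ = Complex.I * ∫ ξ : ℝ, (2 * z + (ξ:ℂ))⁻¹ * unitaryFT (⇑u) ξ
          * (starRingEnd ℂ) (unitaryFT (⇑v) ξ) := by
        rw [← mul_assoc, ← mul_assoc, inv_mul_cancel₀ hsqne, one_mul]
end

section
/- For every s with −1/2 < s < 0 and every j ≥ 0 integer with j > s (in particular all j ≥ 0), one has (2 sin(πs)/π)(−1)^{j+1} ∫₁^∞ (t²−1)^s t^{−2j−1} dt = binom(s, j) = s(s−1)⋯(s−j+1)/j!, where for j = 0 the binomial coefficient is 1. -/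
open MeasureTheory Set Real

lemma real_beta {a b : ℝ} (ha : 0 < a) (hb : 0 < b) :
    ∫ x in Ioo (0:ℝ) 1, x ^ (a - 1) * (1 - x) ^ (b - 1)
      = Real.Gamma a * Real.Gamma b / Real.Gamma (a + b) := by
  have key : Complex.Gamma a * Complex.Gamma b
      = Complex.Gamma (a + b) * Complex.betaIntegral a b :=
    Complex.Gamma_mul_Gamma_eq_betaIntegral (by simpa using ha) (by simpa using hb)
  have hbeta : Complex.betaIntegral a b
      = ((∫ x in (0:ℝ)..1, x ^ (a - 1) * (1 - x) ^ (b - 1) : ℝ) : ℂ) := by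
    rw [Complex.betaIntegral, ← intervalIntegral.integral_ofReal]
    refine intervalIntegral.integral_congr fun x hx => ?_
    rw [uIcc_of_le (by norm_num)] at hx
    push_cast
    rw [Complex.ofReal_cpow hx.1, Complex.ofReal_cpow (by linarith [hx.2])]
    push_cast
    ring
  have hG : Complex.Gamma (a+b) ≠ 0 := Complex.Gamma_ne_zero_of_re_pos (by simpa using add_pos ha hb)
  have : ((∫ x in (0:ℝ)..1, x ^ (a - 1) * (1 - x) ^ (b - 1) : ℝ) : ℂ)
      = ((Real.Gamma a * Real.Gamma b / Real.Gamma (a + b) : ℝ) : ℂ) := by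
    rw [← hbeta]
    push_cast
    rw [← Complex.Gamma_ofReal, ← Complex.Gamma_ofReal, ← Complex.Gamma_ofReal]
    push_cast
    field_simp [key]
    rw [key]; ring
  have h2 := Complex.ofReal_inj.mp this
  rw [← h2, intervalIntegral.integral_of_le (by norm_num : (0:ℝ) ≤ 1),
    integral_Ioc_eq_integral_Ioo]

lemma image_inv_sq : (fun t : ℝ => (t ^ 2)⁻¹) '' Ioi 1 = Ioo (0:ℝ) 1 := by
  ext u
  constructor
  · rintro ⟨t, ht, rfl⟩
    rw [mem_Ioi] at ht
    have h1 : (1:ℝ) < t ^ 2 := by nlinarith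
    exact ⟨inv_pos.mpr (by positivity), inv_lt_one_of_one_lt₀ h1⟩
  · rintro ⟨hu0, hu1⟩
    refine ⟨u⁻¹ ^ ((1:ℝ)/2), ?_, ?_⟩
    · rw [mem_Ioi]
      have : (1:ℝ) < u⁻¹ := (one_lt_inv₀ hu0).mpr hu1
      calc (1:ℝ) = 1 ^ ((1:ℝ)/2) := by simp
        _ < u⁻¹ ^ ((1:ℝ)/2) := by
            apply Real.rpow_lt_rpow (by norm_num) this (by norm_num)
    · show ((u⁻¹ ^ ((1:ℝ)/2)) ^ 2)⁻¹ = u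
      rw [← Real.rpow_natCast (u⁻¹ ^ ((1:ℝ)/2)) 2, ← Real.rpow_mul (by positivity)]
      norm_num

lemma subst_lemma (s : ℝ) (j : ℕ) :
    ∫ u in Ioo (0:ℝ) 1, u ^ ((j:ℝ) - s - 1) * (1 - u) ^ s
      = 2 * ∫ t in Set.Ioi (1:ℝ), (t ^ 2 - 1) ^ s / t ^ (2 * j + 1) := by
  have hmeas : MeasurableSet (Ioi (1:ℝ)) := measurableSet_Ioi
  have hderiv : ∀ t ∈ Ioi (1:ℝ),
      HasDerivWithinAt (fun t : ℝ => (t ^ 2)⁻¹) (-(2 * t) / (t ^ 2) ^ 2) (Ioi 1) t := by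
    intro t ht
    have ht0 : (0:ℝ) < t := lt_trans one_pos ht
    have := ((hasDerivAt_pow 2 t).inv (by positivity)).hasDerivWithinAt (s := Ioi (1:ℝ))
    rw [show -(2 * t) / (t ^ 2) ^ 2 = -(((2:ℕ):ℝ) * t ^ (2 - 1)) / (t ^ 2) ^ 2 by norm_num]
    exact this
  have hinj : InjOn (fun t : ℝ => (t ^ 2)⁻¹) (Ioi 1) := by
    intro x hx y hy h
    simp only [mem_Ioi] at hx hy
    have hx2 : x ^ 2 = y ^ 2 := inv_inj.mp h
    nlinarith
  have := integral_image_eq_integral_abs_deriv_smul hmeas hderiv hinj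
    (fun u => u ^ ((j:ℝ) - s - 1) * (1 - u) ^ s)
  rw [image_inv_sq] at this
  rw [this]
  rw [← integral_const_mul]
  refine setIntegral_congr_fun hmeas fun t ht => ?_
  simp only [mem_Ioi] at ht
  have t0 : (0:ℝ) < t := lt_trans one_pos ht
  have h2 : (0:ℝ) < t ^ 2 := by positivity
  have hm : (0:ℝ) ≤ t ^ 2 - 1 := by nlinarith
  have hb : (t ^ 2)⁻¹ = t ^ (-2 : ℝ) := by
    rw [Real.rpow_neg t0.le, show ((2:ℝ)) = ((2:ℕ):ℝ) by norm_num, Real.rpow_natCast]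
  have e1 : |(-(2 * t) / (t ^ 2) ^ 2)| = 2 / t ^ (3:ℕ) := by
    rw [abs_div, abs_neg, abs_of_pos (by positivity), abs_of_pos (by positivity),
      mul_comm 2 t, show ((t:ℝ)^2)^2 = t * t^3 by ring, mul_div_mul_left _ _ (ne_of_gt t0)]
  have e2 : ((t ^ 2)⁻¹) ^ ((j:ℝ) - s - 1) = t ^ ((-2) * ((j:ℝ) - s - 1)) := by
    rw [hb, Real.rpow_mul t0.le]
  have e3 : (1 - (t ^ 2)⁻¹) ^ s = (t ^ 2 - 1) ^ s * t ^ ((-2) * s) := by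
    have hrw : (1 - (t ^ 2)⁻¹) = (t ^ 2 - 1) * (t ^ 2)⁻¹ := by field_simp
    rw [hrw, Real.mul_rpow hm (by positivity), hb, ← Real.rpow_mul t0.le]
  show |(-(2 * t) / (t ^ 2) ^ 2)| • (((t ^ 2)⁻¹) ^ ((j:ℝ) - s - 1) * (1 - (t ^ 2)⁻¹) ^ s)
      = 2 * ((t ^ 2 - 1) ^ s / t ^ (2 * j + 1))
  rw [smul_eq_mul, e1, e2, e3]
  rw [← Real.rpow_natCast t 3, ← Real.rpow_natCast t (2 * j + 1),
    div_eq_mul_inv, div_eq_mul_inv, ← Real.rpow_neg t0.le, ← Real.rpow_neg t0.le]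
  have hX : t ^ ((-2) * ((j:ℝ) - s - 1)) * t ^ ((-2) * s) * t ^ (-(3:ℕ):ℝ)
      = t ^ (-((2 * j + 1 : ℕ):ℝ)) := by
    rw [← Real.rpow_add t0, ← Real.rpow_add t0]
    congr 1
    push_cast
    ring
  linear_combination (2 * (t ^ 2 - 1) ^ s) * hX

lemma prod_neg (s : ℝ) (j : ℕ) :
    ∏ i ∈ Finset.range j, (s - (i:ℝ)) = (-1:ℝ)^j * ∏ i ∈ Finset.range j, ((i:ℝ) - s) := by
  induction j with
  | zero => simp
  | succ n ih => rw [Finset.prod_range_succ, Finset.prod_range_succ, ih, pow_succ]; ring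

lemma gamma_prod (s : ℝ) (hs : s < 0) (j : ℕ) :
    Real.Gamma ((j:ℝ) - s) = (∏ i ∈ Finset.range j, ((i:ℝ) - s)) * Real.Gamma (-s) := by
  induction j with
  | zero => simp
  | succ n ih =>
    have hn : ((n:ℝ) - s) ≠ 0 := by have := Nat.cast_nonneg (α := ℝ) n; intro h; nlinarith
    have : ((n + 1 : ℕ):ℝ) - s = ((n:ℝ) - s) + 1 := by push_cast; ring
    rw [this, Real.Gamma_add_one hn, ih, Finset.prod_range_succ]
    ring



/-- For `-1/2 < s < 0` and every natural number `j` (automatically `j > s`),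
the contour-deformation identity
`(2 sin(πs)/π) (−1)^{j+1} ∫₁^∞ (t²−1)^s t^{−2j−1} dt = binom(s,j) = s(s−1)⋯(s−j+1)/j!`
holds, where for `j = 0` the generalized binomial coefficient is `1`. -/
theorem stmt_4 (s : ℝ) (hs₁ : -(1 / 2 : ℝ) < s) (hs₂ : s < 0) (j : ℕ) :
    (2 * Real.sin (Real.pi * s) / Real.pi) * (-1 : ℝ) ^ (j + 1) *
        ∫ t in Set.Ioi (1 : ℝ), (t ^ 2 - 1) ^ s / t ^ (2 * j + 1)
      = (∏ i ∈ Finset.range j, (s - i)) / (Nat.factorial j) := by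
  have ha : (0:ℝ) < (j:ℝ) - s := by have := Nat.cast_nonneg (α := ℝ) j; linarith
  have hb : (0:ℝ) < s + 1 := by linarith
  -- the Beta integral value
  have hbeta := real_beta ha hb
  have hs' : (j:ℝ) - s + (s + 1) = ((j:ℕ) + 1 : ℝ) := by push_cast; ring
  rw [hs', show ((j:ℕ) + 1 : ℝ) = ((j:ℕ):ℝ) + 1 from rfl, Real.Gamma_nat_eq_factorial] at hbeta
  have hsub := subst_lemma s j
  have hintegrand : ∀ x : ℝ, x ^ ((j:ℝ) - s - 1) * (1 - x) ^ s
      = x ^ ((j:ℝ) - s - 1) * (1 - x) ^ (s + 1 - 1) := by intro x; norm_num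
  have hIoo : ∫ u in Ioo (0:ℝ) 1, u ^ ((j:ℝ) - s - 1) * (1 - u) ^ s
      = Real.Gamma ((j:ℝ) - s) * Real.Gamma (s + 1) / (Nat.factorial j) := by
    rw [← hbeta]
    simp only [hintegrand]
  have hI : ∫ t in Set.Ioi (1:ℝ), (t ^ 2 - 1) ^ s / t ^ (2 * j + 1)
      = Real.Gamma ((j:ℝ) - s) * Real.Gamma (s + 1) / (2 * Nat.factorial j) := by
    have hfac : (Nat.factorial j : ℝ) ≠ 0 := Nat.cast_ne_zero.mpr (Nat.factorial_ne_zero j)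
    have h := hsub
    rw [hIoo] at h
    field_simp at h
    have hfp : (0:ℝ) < Nat.factorial j := by exact_mod_cast Nat.factorial_pos j
    rw [eq_div_iff (by positivity : (2 * (Nat.factorial j:ℝ)) ≠ 0), h]
    ring
  rw [hI, gamma_prod s hs₂ j]
  -- reflection formula
  have hrefl := Real.Gamma_mul_Gamma_one_sub (-s)
  rw [show (1 - -s) = s + 1 by ring] at hrefl
  have hsin : Real.sin (Real.pi * -s) = - Real.sin (Real.pi * s) := by
    rw [mul_neg, Real.sin_neg]
  rw [hsin] at hrefl
  have hsinne : Real.sin (Real.pi * s) ≠ 0 := by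
    have h1 : -(Real.pi / 2) < Real.pi * s := by nlinarith [Real.pi_pos]
    have h2 : Real.pi * s < 0 := mul_neg_of_pos_of_neg Real.pi_pos hs₂
    exact ne_of_lt (Real.sin_neg_of_neg_of_neg_pi_lt h2 (by nlinarith [Real.pi_pos]))
  have hkey : Real.sin (Real.pi * s) * (Real.Gamma (-s) * Real.Gamma (s + 1)) = - Real.pi := by
    rw [hrefl, div_neg, mul_comm, neg_mul, div_mul_cancel₀ _ hsinne]
  rw [prod_neg s j]
  have hpi : Real.pi ≠ 0 := Real.pi_ne_zero
  have hfac : (Nat.factorial j : ℝ) ≠ 0 := Nat.cast_ne_zero.mpr (Nat.factorial_ne_zero j)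
  field_simp
  linear_combination ((∏ i ∈ Finset.range j, ((i:ℝ) - s)) * (-1:ℝ)^j * (-1)) * hkey
end

section
/- For 1 < p < ∞ and functions u, v ∈ U^p(T₀,T₁) (atomic p-variation spaces allowing atoms starting at the left endpoint), the restriction norms satisfy the superadditivity inequality ‖u‖^p_{Ũ^p(T₀,T₁)} ≤ ‖u‖^p_{Ũ^p(T₀,t)} + ‖u‖^p_{Ũ^p(t,T₁)} for every t ∈ (T₀,T₁). -/
open Set Filter Topology

/-- A `U^p` atom on the interval `(a,b)`, allowing the first partition point to coincide
with the left endpoint (`Ũ^p` atoms): a right-continuous step function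
`Σ_{j<N} φ_j χ_{[t_j, t_{j+1})}` with `a ≤ t₀ < ⋯ < t_N = b` and `Σ_j |φ_j|^p ≤ 1`. -/
def IsUpAtom (p a b : ℝ) (u : ℝ → ℂ) : Prop :=
  ∃ (N : ℕ) (t : ℕ → ℝ) (φ : ℕ → ℂ),
    StrictMono t ∧ a ≤ t 0 ∧ t N = b ∧
      (∑ j ∈ Finset.range N, ‖φ j‖ ^ p) ≤ 1 ∧
      ∀ x ∈ Set.Ioo a b,
        u x = ∑ j ∈ Finset.range N, if t j ≤ x ∧ x < t (j + 1) then φ j else 0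

/-- The set of `ℓ¹`-sums `Σ_j |c_j|` over atomic decompositions `u = Σ_j c_j a_j` of `u`
on `(a,b)`; the `Ũ^p(a,b)` norm is its infimum. -/
def upDecompSums (p a b : ℝ) (u : ℝ → ℂ) : Set ℝ :=
  { S | ∃ (c : ℕ → ℂ) (A : ℕ → ℝ → ℂ),
      (∀ j, IsUpAtom p a b (A j)) ∧ Summable (fun j => ‖c j‖) ∧
      (∀ x ∈ Set.Ioo a b, HasSum (fun j => c j * A j x) (u x)) ∧
      S = ∑' j, ‖c j‖ }

/-- The `Ũ^p(a,b)` (atomic) norm. -/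
noncomputable def UpNorm (p a b : ℝ) (u : ℝ → ℂ) : ℝ := sInf (upDecompSums p a b u)

lemma mem_upDecompSums_nonneg {p a b : ℝ} {u : ℝ → ℂ} {L : ℝ}
    (h : L ∈ upDecompSums p a b u) : 0 ≤ L := by
  obtain ⟨c, A, -, -, -, rfl⟩ := h
  exact tsum_nonneg fun j => norm_nonneg _

lemma bddBelow_upDecompSums (p a b : ℝ) (u : ℝ → ℂ) : BddBelow (upDecompSums p a b u) :=
  ⟨0, fun _ hL => mem_upDecompSums_nonneg hL⟩

lemma isUpAtom_zero {p a b : ℝ} (hab : a ≤ b) : IsUpAtom p a b (fun _ => (0 : ℂ)) := by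
  refine ⟨0, fun n => b + n, fun _ => 0, ?_, by simpa using hab, by simp, by simp, ?_⟩
  · intro m n hmn
    simp only [add_lt_add_iff_left, Nat.cast_lt]
    exact_mod_cast hmn
  · intro x _; simp

lemma shift_mem {p a b : ℝ} {u : ℝ → ℂ} {L : ℝ} (hL : L ∈ upDecompSums p a b u)
    {ε : ℝ} (hε : 0 < ε) (hab : a ≤ b) : L + ε ∈ upDecompSums p a b u := by
  obtain ⟨c, A, hA, hcs, hrep, rfl⟩ := hL
  set c' : ℕ → ℂ := fun n => if n = 0 then (ε : ℂ) else c (n - 1) with hc'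
  set A' : ℕ → ℝ → ℂ := fun n => if n = 0 then (fun _ => 0) else A (n - 1) with hA'
  have hc's : Summable (fun n => ‖c' n‖) := by
    rw [← summable_nat_add_iff 1]
    simpa [hc'] using hcs
  refine ⟨c', A', ?_, hc's, ?_, ?_⟩
  · intro n
    cases n with
    | zero => simpa [hA'] using isUpAtom_zero (p := p) hab
    | succ n => simpa [hA'] using hA n
  · intro x hx
    have h1 : HasSum (fun n => c' (n + 1) * A' (n + 1) x) (u x) := by
      simpa [hc', hA'] using hrep x hx
    have h2 := (hasSum_nat_add_iff (f := fun n => c' n * A' n x) 1).1 h1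
    simpa [hc', hA'] using h2
  · rw [hc's.tsum_eq_zero_add]
    simp only [hc', if_pos rfl]
    rw [Complex.norm_real, Real.norm_eq_abs, abs_of_pos hε]
    have : (fun n : ℕ => ‖if n + 1 = 0 then (ε : ℂ) else c (n + 1 - 1)‖)
        = fun n => ‖c n‖ := by
      funext n; simp
    rw [this]
    ring

noncomputable def stepF (N : ℕ) (q : ℕ → ℝ) (φ : ℕ → ℂ) (x : ℝ) : ℂ :=
  ∑ j ∈ Finset.range N, if q j ≤ x ∧ x < q (j + 1) then φ j else 0

lemma stepF_norm_le {p : ℝ} (hp : 0 < p) {N : ℕ} {q : ℕ → ℝ} {φ : ℕ → ℂ}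
    (hq : StrictMono q) (hφ : (∑ j ∈ Finset.range N, ‖φ j‖ ^ p) ≤ 1) (x : ℝ) :
    ‖stepF N q φ x‖ ≤ 1 := by
  by_cases h : ∃ j ∈ Finset.range N, q j ≤ x ∧ x < q (j + 1)
  · obtain ⟨j0, hj0, hc⟩ := h
    have hstep : stepF N q φ x = φ j0 := by
      rw [stepF, Finset.sum_eq_single_of_mem j0 hj0]
      · simp [hc]
      · intro j hj hne
        rw [if_neg]
        rintro ⟨h1, h2⟩
        rcases lt_or_gt_of_ne hne with hlt | hlt
        · have : q (j + 1) ≤ q j0 := hq.monotone (by omega)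
          linarith [hc.1]
        · have : q (j0 + 1) ≤ q j := hq.monotone (by omega)
          linarith [hc.2]
    rw [hstep]
    have h1 : ‖φ j0‖ ^ p ≤ 1 :=
      le_trans (Finset.single_le_sum (fun i _ => Real.rpow_nonneg (norm_nonneg _) p) hj0) hφ
    by_contra hgt
    push_neg at hgt
    have : (1 : ℝ) < ‖φ j0‖ ^ p :=
      (Real.one_lt_rpow_iff_of_pos (lt_trans one_pos hgt)).2 (Or.inl ⟨hgt, hp⟩)
    linarith
  · have : stepF N q φ x = 0 :=
      Finset.sum_eq_zero fun j hj => if_neg fun hc => h ⟨j, hj, hc⟩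
    simp [this]

lemma stepF_right_const (N : ℕ) (q : ℕ → ℝ) (φ : ℕ → ℂ) (t : ℝ) :
    ∃ δ > 0, ∀ x, t ≤ x → x < t + δ → stepF N q φ x = stepF N q φ t := by
  set s : Finset ℝ :=
    insert 1 ((Finset.range (N + 1)).image fun j => if t < q j then q j - t else 1) with hs
  have hne : s.Nonempty := ⟨1, Finset.mem_insert_self _ _⟩
  refine ⟨s.min' hne, ?_, ?_⟩
  · rw [gt_iff_lt, Finset.lt_min'_iff]
    intro b hb
    rcases Finset.mem_insert.1 hb with rfl | hb
    · norm_num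
    · obtain ⟨j, -, rfl⟩ := Finset.mem_image.1 hb
      split <;> [linarith; norm_num]
  · intro x hx hxδ
    have hkey : ∀ j ≤ N, (q j ≤ x ↔ q j ≤ t) ∧ (x < q j ↔ t < q j) := by
      intro j hj
      by_cases hqt : t < q j
      · have hmem : (q j - t) ∈ s := by
          refine Finset.mem_insert_of_mem (Finset.mem_image.2 ⟨j, ?_, ?_⟩)
          · exact Finset.mem_range.2 (by omega)
          · simp [hqt]
        have : s.min' hne ≤ q j - t := Finset.min'_le _ _ hmem
        constructor
        · constructor <;> intro h <;> linarith
        · constructor <;> intro h <;> linarith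
      · push_neg at hqt
        constructor
        · constructor <;> intro h <;> linarith
        · constructor <;> intro h <;> linarith
    unfold stepF
    refine Finset.sum_congr rfl fun j hj => ?_
    have hjN := Finset.mem_range.1 hj
    have h1 := (hkey j (by omega)).1
    have h2 := (hkey (j + 1) (by omega)).2
    congr 1
    simp only [eq_iff_iff]
    constructor
    · rintro ⟨a, b⟩; exact ⟨h1.1 a, h2.1 b⟩
    · rintro ⟨a, b⟩; exact ⟨h1.2 a, h2.2 b⟩

lemma stepF_eq_zero_of_le {N : ℕ} {q : ℕ → ℝ} {φ : ℕ → ℂ} (hq : Monotone q) {x : ℝ}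
    (h : q N ≤ x) : stepF N q φ x = 0 := by
  refine Finset.sum_eq_zero fun j hj => if_neg ?_
  rintro ⟨-, h2⟩
  have : q (j + 1) ≤ q N := hq (Finset.mem_range.1 hj)
  linarith

lemma stepF_eq_zero_of_lt {N : ℕ} {q : ℕ → ℝ} {φ : ℕ → ℂ} (hq : Monotone q) {x : ℝ}
    (h : x < q 0) : stepF N q φ x = 0 := by
  refine Finset.sum_eq_zero fun j hj => if_neg ?_
  rintro ⟨h1, -⟩
  have : q 0 ≤ q j := hq (Nat.zero_le j)
  linarith
lemma isUpAtom_stepF {p a b : ℝ} {B : ℝ → ℂ} (h : IsUpAtom p a b B) :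
    ∃ (N : ℕ) (q : ℕ → ℝ) (φ : ℕ → ℂ),
      StrictMono q ∧ a ≤ q 0 ∧ q N = b ∧
        (∑ j ∈ Finset.range N, ‖φ j‖ ^ p) ≤ 1 ∧
        ∀ x ∈ Set.Ioo a b, B x = stepF N q φ x := h

/-- anchored version: first partition point is exactly `a`. -/
lemma isUpAtom_anchored {p a b : ℝ} (hp : 0 < p) (hab : a < b) {B : ℝ → ℂ}
    (h : IsUpAtom p a b B) :
    ∃ (M : ℕ) (s : ℕ → ℝ) (ψ : ℕ → ℂ),
      StrictMono s ∧ s 0 = a ∧ s M = b ∧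
        (∑ j ∈ Finset.range M, ‖ψ j‖ ^ p) ≤ 1 ∧ 1 ≤ M ∧
        ∀ x ∈ Set.Ioo a b, B x = stepF M s ψ x := by
  obtain ⟨M, s, ψ, hs, hs0, hsM, hψ, hrep⟩ := isUpAtom_stepF h
  rcases eq_or_lt_of_le hs0 with heq | hlt
  · have hM : 1 ≤ M := by
      rcases Nat.eq_zero_or_pos M with rfl | h'
      · exfalso; rw [← heq] at hsM; exact absurd hsM (ne_of_lt hab)
      · exact h'
    exact ⟨M, s, ψ, hs, heq.symm, hsM, hψ, hM, hrep⟩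
  · refine ⟨M + 1, fun j => if j = 0 then a else s (j - 1),
      fun j => if j = 0 then 0 else ψ (j - 1), ?_, rfl, ?_, ?_, by omega, ?_⟩
    · apply strictMono_nat_of_lt_succ
      intro n
      cases n with
      | zero => simpa using hlt
      | succ n =>
        simp only [Nat.succ_ne_zero, if_false]
        exact hs (by omega)
    · simp [hsM]
    · rw [Finset.sum_range_succ']
      simpa [Real.zero_rpow (ne_of_gt hp)] using hψ
    · intro x hx
      rw [hrep x hx]
      unfold stepF
      rw [Finset.sum_range_succ']
      have h0 : (if (if (0:ℕ) = 0 then a else s (0 - 1)) ≤ x ∧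
          x < (if (1:ℕ) = 0 then a else s (1 - 1)) then (if (0:ℕ) = 0 then (0:ℂ) else ψ (0-1))
          else 0) = 0 := by simp
      rw [h0, add_zero]
      refine Finset.sum_congr rfl fun j hj => by simp

lemma sum_range_add' (f : ℕ → ℂ) (N M : ℕ) :
    ∑ j ∈ Finset.range (N + M), f j
      = (∑ j ∈ Finset.range N, f j) + ∑ i ∈ Finset.range M, f (N + i) := by
  rw [← Finset.sum_range_add_sum_Ico f (Nat.le_add_right N M),
    Finset.sum_Ico_eq_sum_range, Nat.add_sub_cancel_left]

lemma sum_range_add'' (f : ℕ → ℝ) (N M : ℕ) :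
    ∑ j ∈ Finset.range (N + M), f j
      = (∑ j ∈ Finset.range N, f j) + ∑ i ∈ Finset.range M, f (N + i) := by
  rw [← Finset.sum_range_add_sum_Ico f (Nat.le_add_right N M),
    Finset.sum_Ico_eq_sum_range, Nat.add_sub_cancel_left]

lemma glue {p : ℝ} (hp : 1 < p) {T₀ t T₁ : ℝ} (h₀ : T₀ < t) (h₁ : t < T₁)
    {N : ℕ} {r : ℕ → ℝ} {φ : ℕ → ℂ} (hr : StrictMono r) (hr0 : T₀ ≤ r 0) (hrN : r N = t)
    (hφ : (∑ j ∈ Finset.range N, ‖φ j‖ ^ p) ≤ 1)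
    {M : ℕ} {s : ℕ → ℝ} {ψ : ℕ → ℂ} (hs : StrictMono s) (hs0 : s 0 = t) (hsM : s M = T₁)
    (hψ : (∑ j ∈ Finset.range M, ‖ψ j‖ ^ p) ≤ 1) (hM : 1 ≤ M) (α β : ℂ) :
    ∃ G : ℝ → ℂ, IsUpAtom p T₀ T₁ G ∧
      ∀ x : ℝ, (((‖α‖ ^ p + ‖β‖ ^ p) ^ (1 / p) : ℝ) : ℂ) * G x
        = α * stepF N r φ x + β * stepF M s ψ x := by
  have hp0 : 0 < p := lt_trans one_pos hp
  set γ : ℝ := (‖α‖ ^ p + ‖β‖ ^ p) ^ (1 / p) with hγdef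
  set q : ℕ → ℝ := fun j => if j ≤ N then r j else s (j - N) with hqdef
  set Φ : ℕ → ℂ := fun j => if j < N then (α / γ) * φ j else (β / γ) * ψ (j - N) with hΦdef
  have hqr : ∀ j, j ≤ N → q j = r j := fun j hj => if_pos hj
  have hqs : ∀ i, q (N + i) = s i := by
    intro i
    cases i with
    | zero => show q N = s 0; rw [hqr N le_rfl, hrN, hs0]
    | succ i =>
      have hn : ¬ (N + (i + 1) ≤ N) := by omega
      show q (N + (i + 1)) = s (i + 1)
      rw [hqdef]; simp only [hn, if_false, Nat.add_sub_cancel_left]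
  have hΦr : ∀ j, j < N → Φ j = (α / γ) * φ j := fun j hj => if_pos hj
  have hΦs : ∀ i, Φ (N + i) = (β / γ) * ψ i := by
    intro i
    have hn : ¬ (N + i < N) := by omega
    rw [hΦdef]; simp only [hn, if_false, Nat.add_sub_cancel_left]
  have hq : StrictMono q := by
    intro i j hij
    rcases le_or_gt j N with hj | hj
    · rw [hqr i (by omega), hqr j hj]; exact hr hij
    · have e2 : q j = s (j - N) := if_neg (by omega)
      rcases le_or_gt i N with hi | hi
      · rw [hqr i hi, e2]
        have h1 : r i ≤ r N := hr.monotone hi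
        have h2 : s 0 < s (j - N) := hs (by omega)
        rw [hrN] at h1; rw [hs0] at h2; linarith
      · have e1 : q i = s (i - N) := if_neg (by omega)
        rw [e1, e2]; exact hs (by omega)
  have hγ0 : 0 ≤ γ := Real.rpow_nonneg (by positivity) _
  have hγzero : γ = 0 → α = 0 ∧ β = 0 := by
    intro h
    have hbase : ‖α‖ ^ p + ‖β‖ ^ p = 0 := by
      by_contra hne
      have hpos : 0 < ‖α‖ ^ p + ‖β‖ ^ p :=
        lt_of_le_of_ne (by positivity) (Ne.symm hne)
      have := Real.rpow_pos_of_pos hpos (1 / p)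
      rw [← hγdef] at this; linarith
    have hα : ‖α‖ ^ p = 0 := by
      nlinarith [Real.rpow_nonneg (norm_nonneg α) p, Real.rpow_nonneg (norm_nonneg β) p]
    have hβ : ‖β‖ ^ p = 0 := by
      nlinarith [Real.rpow_nonneg (norm_nonneg α) p, Real.rpow_nonneg (norm_nonneg β) p]
    rw [Real.rpow_eq_zero (norm_nonneg α) (ne_of_gt hp0), norm_eq_zero] at hα
    rw [Real.rpow_eq_zero (norm_nonneg β) (ne_of_gt hp0), norm_eq_zero] at hβ
    exact ⟨hα, hβ⟩
  have hγcoe : ‖((γ : ℝ) : ℂ)‖ = γ := by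
    rw [Complex.norm_real, Real.norm_eq_abs, abs_of_nonneg hγ0]
  -- the split identity, valid for all x (and all γ, thanks to junk division)
  have split : ∀ x, stepF (N + M) q Φ x
      = (α / γ) * stepF N r φ x + (β / γ) * stepF M s ψ x := by
    intro x
    unfold stepF
    rw [sum_range_add' (fun j => if q j ≤ x ∧ x < q (j + 1) then Φ j else 0) N M,
      Finset.mul_sum, Finset.mul_sum]
    congr 1
    · refine Finset.sum_congr rfl fun j hj => ?_
      have hjN := Finset.mem_range.1 hj
      rw [hqr j (by omega), hqr (j + 1) (by omega), hΦr j hjN, mul_ite, mul_zero]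
    · refine Finset.sum_congr rfl fun i hi => ?_
      have : N + i + 1 = N + (i + 1) := by omega
      rw [this, hqs i, hqs (i + 1), hΦs i, mul_ite, mul_zero]
  have hsumΦ : (∑ j ∈ Finset.range (N + M), ‖Φ j‖ ^ p) ≤ 1 := by
    rcases eq_or_lt_of_le hγ0 with hγ | hγ
    · obtain ⟨hα, hβ⟩ := hγzero hγ.symm
      have hz : ∀ j, Φ j = 0 := by
        intro j; rw [hΦdef]; simp [hα, hβ]
      simp only [hz, norm_zero, Real.zero_rpow (ne_of_gt hp0), Finset.sum_const_zero]
      norm_num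
    · have hγp : γ ^ p = ‖α‖ ^ p + ‖β‖ ^ p := by
        rw [hγdef, ← Real.rpow_mul (by positivity), one_div,
          inv_mul_cancel₀ (ne_of_gt hp0), Real.rpow_one]
      have hγppos : 0 < γ ^ p := Real.rpow_pos_of_pos hγ _
      rw [sum_range_add'' (fun j => ‖Φ j‖ ^ p) N M]
      have e1 : (∑ j ∈ Finset.range N, ‖Φ j‖ ^ p) ≤ ‖α‖ ^ p / γ ^ p := by
        have : ∀ j ∈ Finset.range N, ‖Φ j‖ ^ p = ‖α‖ ^ p / γ ^ p * ‖φ j‖ ^ p := by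
          intro j hj
          rw [hΦr j (Finset.mem_range.1 hj), norm_mul, norm_div, hγcoe,
            Real.mul_rpow (by positivity) (norm_nonneg _),
            Real.div_rpow (norm_nonneg _) hγ0]
        rw [Finset.sum_congr rfl this, ← Finset.mul_sum]
        calc ‖α‖ ^ p / γ ^ p * ∑ j ∈ Finset.range N, ‖φ j‖ ^ p
            ≤ ‖α‖ ^ p / γ ^ p * 1 := by
              apply mul_le_mul_of_nonneg_left hφ (by positivity)
          _ = ‖α‖ ^ p / γ ^ p := mul_one _
      have e2 : (∑ i ∈ Finset.range M, ‖Φ (N + i)‖ ^ p) ≤ ‖β‖ ^ p / γ ^ p := by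
        have : ∀ i ∈ Finset.range M, ‖Φ (N + i)‖ ^ p = ‖β‖ ^ p / γ ^ p * ‖ψ i‖ ^ p := by
          intro i hi
          rw [hΦs i, norm_mul, norm_div, hγcoe,
            Real.mul_rpow (by positivity) (norm_nonneg _),
            Real.div_rpow (norm_nonneg _) hγ0]
        rw [Finset.sum_congr rfl this, ← Finset.mul_sum]
        calc ‖β‖ ^ p / γ ^ p * ∑ i ∈ Finset.range M, ‖ψ i‖ ^ p
            ≤ ‖β‖ ^ p / γ ^ p * 1 := by
              apply mul_le_mul_of_nonneg_left hψ (by positivity)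
          _ = ‖β‖ ^ p / γ ^ p := mul_one _
      calc (∑ j ∈ Finset.range N, ‖Φ j‖ ^ p) + ∑ i ∈ Finset.range M, ‖Φ (N + i)‖ ^ p
          ≤ ‖α‖ ^ p / γ ^ p + ‖β‖ ^ p / γ ^ p := add_le_add e1 e2
        _ = (‖α‖ ^ p + ‖β‖ ^ p) / γ ^ p := (add_div _ _ _).symm
        _ = 1 := by rw [← hγp, div_self (ne_of_gt hγppos)]
  refine ⟨stepF (N + M) q Φ, ⟨N + M, q, Φ, hq, ?_, ?_, hsumΦ, fun x _ => rfl⟩, ?_⟩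
  · rw [hqr 0 (Nat.zero_le N)]; exact hr0
  · rw [hqs M]; exact hsM
  · intro x
    rw [split x]
    rcases eq_or_lt_of_le hγ0 with hγ | hγ
    · obtain ⟨hα, hβ⟩ := hγzero hγ.symm
      rw [hα, hβ, ← hγ]
      push_cast
      ring
    · have hγne : ((γ : ℝ) : ℂ) ≠ 0 := by
        simpa using ne_of_gt hγ
      field_simp

lemma hasSum_at_junction {p : ℝ} (hp0 : 0 < p) {T₀ T₁ t : ℝ} (h₀ : T₀ < t) (h₁ : t < T₁)
    {u : ℝ → ℂ} (hw : (upDecompSums p T₀ T₁ u).Nonempty)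
    {d : ℕ → ℂ} {RF : ℕ → ℝ → ℂ}
    (hds : Summable fun k => ‖d k‖)
    (hRFbd : ∀ k x, ‖RF k x‖ ≤ 1)
    (hRFconst : ∀ k, ∃ δ > 0, ∀ x, t ≤ x → x < t + δ → RF k x = RF k t)
    (hrep : ∀ x ∈ Ioo t T₁, HasSum (fun k => d k * RF k x) (u x)) :
    HasSum (fun k => d k * RF k t) (u t) := by
  obtain ⟨W, c0, A0, hA0, hc0s, hrep0, -⟩ := hw
  choose N0 r0 φ0 h0m h00 h0N h0φ h0rep using fun j => isUpAtom_stepF (hA0 j)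
  set F0 : ℕ → ℝ → ℂ := fun j => stepF (N0 j) (r0 j) (φ0 j) with hF0
  have hbd0 : ∀ j x, ‖F0 j x‖ ≤ 1 := fun j x => stepF_norm_le hp0 (h0m j) (h0φ j) x
  have hIoo : Ioo t T₁ ∈ 𝓝[>] t := Ioo_mem_nhdsGT_of_mem ⟨le_refl t, h₁⟩
  have hIoo2 : Ioo T₀ T₁ ∈ 𝓝[>] t :=
    Filter.mem_of_superset hIoo (fun x hx => ⟨lt_trans h₀ hx.1, hx.2⟩)
  have hsum1 : Summable (fun k => d k * RF k t) := by
    apply Summable.of_norm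
    refine Summable.of_nonneg_of_le (fun k => norm_nonneg _) (fun k => ?_) hds
    rw [norm_mul]
    calc ‖d k‖ * ‖RF k t‖ ≤ ‖d k‖ * 1 :=
          mul_le_mul_of_nonneg_left (hRFbd k t) (norm_nonneg _)
      _ = ‖d k‖ := mul_one _
  rw [hsum1.hasSum_iff]
  have T1 : Tendsto (fun x => ∑' k, d k * RF k x) (𝓝[>] t) (𝓝 (∑' k, d k * RF k t)) := by
    apply tendsto_tsum_of_dominated_convergence hds
    · intro k
      obtain ⟨δ, hδ, hconst⟩ := hRFconst k
      have hev : ∀ᶠ x in 𝓝[>] t, d k * RF k t = d k * RF k x := by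
        filter_upwards [Ioo_mem_nhdsGT_of_mem (⟨le_refl t, by linarith⟩ : t ∈ Ico t (t + δ))]
          with x hx
        rw [hconst x hx.1.le hx.2]
      exact tendsto_const_nhds.congr' hev
    · refine Eventually.of_forall fun x k => ?_
      rw [norm_mul]
      calc ‖d k‖ * ‖RF k x‖ ≤ ‖d k‖ * 1 :=
            mul_le_mul_of_nonneg_left (hRFbd k x) (norm_nonneg _)
        _ = ‖d k‖ := mul_one _
  have T2 : Tendsto (fun x => ∑' j, c0 j * F0 j x) (𝓝[>] t) (𝓝 (∑' j, c0 j * F0 j t)) := by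
    apply tendsto_tsum_of_dominated_convergence hc0s
    · intro j
      obtain ⟨δ, hδ, hconst⟩ := stepF_right_const (N0 j) (r0 j) (φ0 j) t
      have hev : ∀ᶠ x in 𝓝[>] t, c0 j * F0 j t = c0 j * F0 j x := by
        filter_upwards [Ioo_mem_nhdsGT_of_mem (⟨le_refl t, by linarith⟩ : t ∈ Ico t (t + δ))]
          with x hx
        rw [hF0]
        simp only []
        rw [hconst x hx.1.le hx.2]
      exact tendsto_const_nhds.congr' hev
    · refine Eventually.of_forall fun x j => ?_
      rw [norm_mul]
      calc ‖c0 j‖ * ‖F0 j x‖ ≤ ‖c0 j‖ * 1 :=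
            mul_le_mul_of_nonneg_left (hbd0 j x) (norm_nonneg _)
        _ = ‖c0 j‖ := mul_one _
  have E1 : (fun x => ∑' k, d k * RF k x) =ᶠ[𝓝[>] t] u := by
    filter_upwards [hIoo] with x hx
    exact (hrep x hx).tsum_eq
  have E2 : (fun x => ∑' j, c0 j * F0 j x) =ᶠ[𝓝[>] t] u := by
    filter_upwards [hIoo2] with x hx
    have he : (fun j => c0 j * A0 j x) = fun j => c0 j * F0 j x :=
      funext fun j => by rw [h0rep j x hx]
    exact (he ▸ (hrep0 x hx)).tsum_eq
  have hU1 : Tendsto u (𝓝[>] t) (𝓝 (∑' k, d k * RF k t)) := T1.congr' E1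
  have hU2 : Tendsto u (𝓝[>] t) (𝓝 (∑' j, c0 j * F0 j t)) := T2.congr' E2
  have huniq : (∑' k, d k * RF k t) = ∑' j, c0 j * F0 j t :=
    tendsto_nhds_unique hU1 hU2
  have hval : (∑' j, c0 j * F0 j t) = u t := by
    have ht : t ∈ Ioo T₀ T₁ := ⟨h₀, h₁⟩
    have he : (fun j => c0 j * A0 j t) = fun j => c0 j * F0 j t :=
      funext fun j => by rw [h0rep j t ht]
    exact (he ▸ (hrep0 t ht)).tsum_eq
  rw [huniq, hval]

set_option maxHeartbeats 2000000 in
lemma key {p : ℝ} (hp : 1 < p) {T₀ T₁ t : ℝ} (h₀ : T₀ < t) (h₁ : t < T₁) {u : ℝ → ℂ}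
    (hw : (upDecompSums p T₀ T₁ u).Nonempty)
    {L M : ℝ} (hL : L ∈ upDecompSums p T₀ t u) (hM : M ∈ upDecompSums p t T₁ u)
    (hLpos : 0 < L) (hMpos : 0 < M) :
    UpNorm p T₀ T₁ u ≤ (L ^ p + M ^ p) ^ (1 / p) := by
  have hp0 : 0 < p := lt_trans one_pos hp
  obtain ⟨c, A, hA, hcs, hcrep, hLdef⟩ := hL
  obtain ⟨d, B, hB, hds, hdrep, hMdef⟩ := hM
  choose N r φ hrm hr0 hrN hφ hArep using fun i => isUpAtom_stepF (hA i)
  choose Mk s ψ hsm hs0 hsM hψ hMk hBrep using fun k => isUpAtom_anchored hp0 h₁ (hB k)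
  set LF : ℕ → ℝ → ℂ := fun i => stepF (N i) (r i) (φ i) with hLF
  set RF : ℕ → ℝ → ℂ := fun k => stepF (Mk k) (s k) (ψ k) with hRF
  have hLFbd : ∀ i x, ‖LF i x‖ ≤ 1 := fun i x => stepF_norm_le hp0 (hrm i) (hφ i) x
  have hRFbd : ∀ k x, ‖RF k x‖ ≤ 1 := fun k x => stepF_norm_le hp0 (hsm k) (hψ k) x
  have hLFz : ∀ i x, t ≤ x → LF i x = 0 := fun i x hx =>
    stepF_eq_zero_of_le (hrm i).monotone (by rw [hrN i]; exact hx)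
  have hRFz : ∀ k x, x < t → RF k x = 0 := fun k x hx =>
    stepF_eq_zero_of_lt (hsm k).monotone (by rw [hs0 k]; exact hx)
  set α : ℕ × ℕ → ℂ := fun ik => ((‖d ik.2‖ / M : ℝ) : ℂ) * c ik.1 with hα
  set β : ℕ × ℕ → ℂ := fun ik => ((‖c ik.1‖ / L : ℝ) : ℂ) * d ik.2 with hβ
  choose G hG hGid using fun ik : ℕ × ℕ =>
    glue hp h₀ h₁ (hrm ik.1) (hr0 ik.1) (hrN ik.1) (hφ ik.1)
      (hsm ik.2) (hs0 ik.2) (hsM ik.2) (hψ ik.2) (hMk ik.2) (α ik) (β ik)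
  set γ : ℕ × ℕ → ℝ := fun ik => (‖α ik‖ ^ p + ‖β ik‖ ^ p) ^ (1 / p) with hγ
  have hγ0 : ∀ ik, 0 ≤ γ ik := fun ik => Real.rpow_nonneg (by positivity) _
  set Cst : ℝ := ((1 / M) ^ p + (1 / L) ^ p) ^ (1 / p) with hCst
  have hnormα : ∀ ik : ℕ × ℕ, ‖α ik‖ = (‖c ik.1‖ * ‖d ik.2‖) * (1 / M) := by
    intro ik
    rw [hα]
    simp only [norm_mul, Complex.norm_real, Real.norm_eq_abs,
      abs_of_nonneg (div_nonneg (norm_nonneg (d ik.2)) hMpos.le)]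
    ring
  have hnormβ : ∀ ik : ℕ × ℕ, ‖β ik‖ = (‖c ik.1‖ * ‖d ik.2‖) * (1 / L) := by
    intro ik
    rw [hβ]
    simp only [norm_mul, Complex.norm_real, Real.norm_eq_abs,
      abs_of_nonneg (div_nonneg (norm_nonneg (c ik.1)) hLpos.le)]
    ring
  have hγval : ∀ ik, γ ik = (‖c ik.1‖ * ‖d ik.2‖) * Cst := by
    intro ik
    have hcd : (0:ℝ) ≤ ‖c ik.1‖ * ‖d ik.2‖ := by positivity
    rw [hγ]
    simp only []
    rw [hnormα ik, hnormβ ik,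
      Real.mul_rpow hcd (by positivity), Real.mul_rpow hcd (by positivity), ← mul_add,
      Real.mul_rpow (by positivity) (by positivity),
      ← Real.rpow_mul hcd, mul_one_div_cancel (ne_of_gt hp0), Real.rpow_one]
  have hcds : Summable (fun ik : ℕ × ℕ => ‖c ik.1‖ * ‖d ik.2‖) :=
    hcs.mul_of_nonneg hds (fun _ => norm_nonneg _) (fun _ => norm_nonneg _)
  have hγs : Summable γ :=
    (hcds.mul_right Cst).congr fun ik => (hγval ik).symm
  have htsumcd : ∑' ik : ℕ × ℕ, ‖c ik.1‖ * ‖d ik.2‖ = L * M := by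
    rw [hLdef, hMdef]
    exact (hcs.tsum_mul_tsum hds hcds).symm
  have htsumγ : ∑' ik, γ ik = (L ^ p + M ^ p) ^ (1 / p) := by
    have e0 : ∑' ik, γ ik = (L * M) * Cst := by
      calc ∑' ik, γ ik = ∑' ik : ℕ × ℕ, (‖c ik.1‖ * ‖d ik.2‖) * Cst := tsum_congr hγval
        _ = (∑' ik : ℕ × ℕ, ‖c ik.1‖ * ‖d ik.2‖) * Cst := tsum_mul_right
        _ = (L * M) * Cst := by rw [htsumcd]
    rw [e0]
    have hLM : (0:ℝ) < L * M := mul_pos hLpos hMpos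
    have e1 : L * M * (1 / M) = L := by field_simp
    have e2 : L * M * (1 / L) = M := by field_simp
    calc (L * M) * Cst = ((L * M) ^ p) ^ (1 / p) * Cst := by
          rw [← Real.rpow_mul hLM.le, mul_one_div_cancel (ne_of_gt hp0), Real.rpow_one]
      _ = ((L * M) ^ p * ((1 / M) ^ p + (1 / L) ^ p)) ^ (1 / p) := by
          rw [hCst, ← Real.mul_rpow (by positivity) (by positivity)]
      _ = (L ^ p + M ^ p) ^ (1 / p) := by
          rw [mul_add, ← Real.mul_rpow hLM.le (by positivity),
            ← Real.mul_rpow hLM.le (by positivity), e1, e2]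
  obtain ⟨E⟩ : Nonempty (ℕ ≃ ℕ × ℕ) := ⟨(Denumerable.eqv (ℕ × ℕ)).symm⟩
  have hmem : (∑' ik, γ ik) ∈ upDecompSums p T₀ T₁ u := by
    refine ⟨fun n => ((γ (E n) : ℝ) : ℂ), fun n => G (E n), fun n => hG (E n), ?_, ?_, ?_⟩
    · have h1 : Summable (fun n => γ (E n)) := E.summable_iff.2 hγs
      refine h1.congr fun n => ?_
      rw [Complex.norm_real, Real.norm_eq_abs, abs_of_nonneg (hγ0 _)]
    · intro x hx
      have hg1 : HasSum (fun k => ((‖d k‖ / M : ℝ) : ℂ)) 1 := by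
        have h1 : HasSum (fun k => ‖d k‖) M := by rw [hMdef]; exact hds.hasSum
        have h2 : HasSum (fun k => ‖d k‖ / M) 1 := by
          simpa [div_self (ne_of_gt hMpos)] using h1.div_const M
        have h3 := h2.map Complex.ofRealHom Complex.continuous_ofReal
        simpa only [Function.comp_def, map_one, Complex.ofRealHom_eq_coe] using h3
      have hg2 : HasSum (fun i => ((‖c i‖ / L : ℝ) : ℂ)) 1 := by
        have h1 : HasSum (fun i => ‖c i‖) L := by rw [hLdef]; exact hcs.hasSum
        have h2 : HasSum (fun i => ‖c i‖ / L) 1 := by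
          simpa [div_self (ne_of_gt hLpos)] using h1.div_const L
        have h3 := h2.map Complex.ofRealHom Complex.continuous_ofReal
        simpa only [Function.comp_def, map_one, Complex.ofRealHom_eq_coe] using h3
      have hsumm1 : Summable (fun ik : ℕ × ℕ =>
          (c ik.1 * LF ik.1 x) * ((‖d ik.2‖ / M : ℝ) : ℂ)) := by
        apply Summable.of_norm
        have hb : Summable (fun ik : ℕ × ℕ => ‖c ik.1‖ * (‖d ik.2‖ / M)) :=
          hcs.mul_of_nonneg (hds.div_const M) (fun _ => norm_nonneg _)
            (fun k => div_nonneg (norm_nonneg _) hMpos.le)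
        refine Summable.of_nonneg_of_le (fun ik => norm_nonneg _) (fun ik => ?_) hb
        rw [norm_mul, norm_mul, Complex.norm_real, Real.norm_eq_abs,
          abs_of_nonneg (div_nonneg (norm_nonneg (d ik.2)) hMpos.le)]
        have hb1 := hLFbd ik.1 x
        have h0 : (0:ℝ) ≤ ‖d ik.2‖ / M := div_nonneg (norm_nonneg _) hMpos.le
        calc ‖c ik.1‖ * ‖LF ik.1 x‖ * (‖d ik.2‖ / M)
            ≤ ‖c ik.1‖ * 1 * (‖d ik.2‖ / M) := by
              apply mul_le_mul_of_nonneg_right _ h0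
              exact mul_le_mul_of_nonneg_left hb1 (norm_nonneg _)
          _ = ‖c ik.1‖ * (‖d ik.2‖ / M) := by ring
      have hsumm2 : Summable (fun ik : ℕ × ℕ =>
          ((‖c ik.1‖ / L : ℝ) : ℂ) * (d ik.2 * RF ik.2 x)) := by
        apply Summable.of_norm
        have hb : Summable (fun ik : ℕ × ℕ => (‖c ik.1‖ / L) * ‖d ik.2‖) :=
          (hcs.div_const L).mul_of_nonneg hds
            (fun i => div_nonneg (norm_nonneg _) hLpos.le) (fun _ => norm_nonneg _)
        refine Summable.of_nonneg_of_le (fun ik => norm_nonneg _) (fun ik => ?_) hb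
        rw [norm_mul, norm_mul, Complex.norm_real, Real.norm_eq_abs,
          abs_of_nonneg (div_nonneg (norm_nonneg (c ik.1)) hLpos.le)]
        have hb1 := hRFbd ik.2 x
        have h0 : (0:ℝ) ≤ ‖c ik.1‖ / L := div_nonneg (norm_nonneg _) hLpos.le
        calc ‖c ik.1‖ / L * (‖d ik.2‖ * ‖RF ik.2 x‖)
            ≤ ‖c ik.1‖ / L * (‖d ik.2‖ * 1) := by
              apply mul_le_mul_of_nonneg_left _ h0
              exact mul_le_mul_of_nonneg_left hb1 (norm_nonneg _)
          _ = ‖c ik.1‖ / L * ‖d ik.2‖ := by ring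
      have hbig : HasSum (fun ik : ℕ × ℕ => ((γ ik : ℝ) : ℂ) * G ik x) (u x) := by
        have hfeq : (fun ik : ℕ × ℕ => ((γ ik : ℝ) : ℂ) * G ik x)
            = fun ik => α ik * LF ik.1 x + β ik * RF ik.2 x :=
          funext fun ik => hGid ik x
        rw [hfeq]
        rcases lt_trichotomy x t with hxt | hxt | hxt
        · have hf : HasSum (fun i => c i * LF i x) (u x) := by
            have he : (fun i => c i * A i x) = fun i => c i * LF i x :=
              funext fun i => by rw [hArep i x ⟨hx.1, hxt⟩]
            exact he ▸ hcrep x ⟨hx.1, hxt⟩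
          have H1 : HasSum (fun ik : ℕ × ℕ => α ik * LF ik.1 x) (u x) := by
            have h5 := hf.mul hg1 hsumm1
            rw [mul_one] at h5
            have he2 : (fun ik : ℕ × ℕ => (c ik.1 * LF ik.1 x) * ((‖d ik.2‖ / M : ℝ) : ℂ))
                = fun ik => α ik * LF ik.1 x := funext fun ik => by rw [hα]; ring
            exact he2 ▸ h5
          have H2 : HasSum (fun ik : ℕ × ℕ => β ik * RF ik.2 x) 0 := by
            have he : (fun ik : ℕ × ℕ => β ik * RF ik.2 x) = fun _ => 0 :=
              funext fun ik => by rw [hRFz ik.2 x hxt, mul_zero]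
            rw [he]; exact hasSum_zero
          simpa using H1.add H2
        · subst hxt
          have H1 : HasSum (fun ik : ℕ × ℕ => α ik * LF ik.1 x) 0 := by
            have he : (fun ik : ℕ × ℕ => α ik * LF ik.1 x) = fun _ => 0 :=
              funext fun ik => by rw [hLFz ik.1 x le_rfl, mul_zero]
            rw [he]; exact hasSum_zero
          have hfk : HasSum (fun k => d k * RF k x) (u x) := by
            apply hasSum_at_junction hp0 h₀ h₁ hw hds hRFbd
            · intro k; exact stepF_right_const (Mk k) (s k) (ψ k) x
            · intro y hy
              have he : (fun k => d k * B k y) = fun k => d k * RF k y :=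
                funext fun k => by rw [hBrep k y hy]
              exact he ▸ hdrep y hy
          have H2 : HasSum (fun ik : ℕ × ℕ => β ik * RF ik.2 x) (u x) := by
            have h5 := hg2.mul hfk hsumm2
            rw [one_mul] at h5
            have he : (fun ik : ℕ × ℕ => ((‖c ik.1‖ / L : ℝ) : ℂ) * (d ik.2 * RF ik.2 x))
                = fun ik => β ik * RF ik.2 x := funext fun ik => by rw [hβ]; ring
            exact he ▸ h5
          simpa using H1.add H2
        · have H1 : HasSum (fun ik : ℕ × ℕ => α ik * LF ik.1 x) 0 := by
            have he : (fun ik : ℕ × ℕ => α ik * LF ik.1 x) = fun _ => 0 :=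
              funext fun ik => by rw [hLFz ik.1 x hxt.le, mul_zero]
            rw [he]; exact hasSum_zero
          have hfk : HasSum (fun k => d k * RF k x) (u x) := by
            have he : (fun k => d k * B k x) = fun k => d k * RF k x :=
              funext fun k => by rw [hBrep k x ⟨hxt, hx.2⟩]
            exact he ▸ hdrep x ⟨hxt, hx.2⟩
          have H2 : HasSum (fun ik : ℕ × ℕ => β ik * RF ik.2 x) (u x) := by
            have h5 := hg2.mul hfk hsumm2
            rw [one_mul] at h5
            have he : (fun ik : ℕ × ℕ => ((‖c ik.1‖ / L : ℝ) : ℂ) * (d ik.2 * RF ik.2 x))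
                = fun ik => β ik * RF ik.2 x := funext fun ik => by rw [hβ]; ring
            exact he ▸ h5
          simpa using H1.add H2
      exact (Equiv.hasSum_iff E).2 hbig
    · rw [← E.tsum_eq γ]
      exact tsum_congr fun n => by
        rw [Complex.norm_real, Real.norm_eq_abs, abs_of_nonneg (hγ0 _)]
  calc UpNorm p T₀ T₁ u ≤ ∑' ik, γ ik :=
        csInf_le (bddBelow_upDecompSums p T₀ T₁ u) hmem
    _ = (L ^ p + M ^ p) ^ (1 / p) := htsumγ
/-- For `1 < p < ∞` and `u` in the atomic spaces on the subintervals and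
on the whole interval, the restriction norms are `p`-superadditive:
`‖u‖^p_{Ũ^p(T₀,T₁)} ≤ ‖u‖^p_{Ũ^p(T₀,t)} + ‖u‖^p_{Ũ^p(t,T₁)}` for every `t ∈ (T₀,T₁)`. -/
theorem stmt_11 (p : ℝ) (hp : 1 < p) (T₀ T₁ t : ℝ) (h₀ : T₀ < t) (h₁ : t < T₁)
    (u : ℝ → ℂ)
    (hw : (upDecompSums p T₀ T₁ u).Nonempty)
    (hl : (upDecompSums p T₀ t u).Nonempty) (hr : (upDecompSums p t T₁ u).Nonempty) :
    UpNorm p T₀ T₁ u ^ p ≤ UpNorm p T₀ t u ^ p + UpNorm p t T₁ u ^ p := by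
  have hp0 : 0 < p := lt_trans one_pos hp
  set Nl := UpNorm p T₀ t u with hNl
  set Nr := UpNorm p t T₁ u with hNr
  set Nw := UpNorm p T₀ T₁ u with hNw
  have hNl0 : 0 ≤ Nl := Real.sInf_nonneg fun x hx => mem_upDecompSums_nonneg hx
  have hNr0 : 0 ≤ Nr := Real.sInf_nonneg fun x hx => mem_upDecompSums_nonneg hx
  have hNw0 : 0 ≤ Nw := Real.sInf_nonneg fun x hx => mem_upDecompSums_nonneg hx
  have hkey : ∀ ε ∈ Ioi (0:ℝ), Nw ^ p ≤ (Nl + 2*ε) ^ p + (Nr + 2*ε) ^ p := by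
    intro ε hε
    rw [mem_Ioi] at hε
    have h1 : sInf (upDecompSums p T₀ t u) < Nl + ε := by
      rw [hNl]; exact lt_add_of_pos_right _ hε
    have h2 : sInf (upDecompSums p t T₁ u) < Nr + ε := by
      rw [hNr]; exact lt_add_of_pos_right _ hε
    obtain ⟨L, hLmem, hLlt⟩ := exists_lt_of_csInf_lt hl h1
    obtain ⟨R, hRmem, hRlt⟩ := exists_lt_of_csInf_lt hr h2
    have hL' := shift_mem hLmem hε (le_of_lt h₀)
    have hR' := shift_mem hRmem hε (le_of_lt h₁)
    have hLp : 0 < L + ε := add_pos_of_nonneg_of_pos (mem_upDecompSums_nonneg hLmem) hε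
    have hRp : 0 < R + ε := add_pos_of_nonneg_of_pos (mem_upDecompSums_nonneg hRmem) hε
    have hk := key hp h₀ h₁ hw hL' hR' hLp hRp
    have hbase : (0:ℝ) ≤ (L + ε) ^ p + (R + ε) ^ p := by positivity
    have h3 : Nw ^ p ≤ (L + ε) ^ p + (R + ε) ^ p := by
      calc Nw ^ p ≤ (((L + ε) ^ p + (R + ε) ^ p) ^ (1/p)) ^ p :=
            Real.rpow_le_rpow hNw0 hk hp0.le
        _ = (L + ε) ^ p + (R + ε) ^ p := by
            rw [← Real.rpow_mul hbase, one_div, inv_mul_cancel₀ (ne_of_gt hp0),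
              Real.rpow_one]
    refine le_trans h3 (add_le_add ?_ ?_)
    · exact Real.rpow_le_rpow (by positivity) (by linarith) hp0.le
    · exact Real.rpow_le_rpow (by positivity) (by linarith) hp0.le
  have hcont : Tendsto (fun ε : ℝ => (Nl + 2*ε) ^ p + (Nr + 2*ε) ^ p) (𝓝[>] 0)
      (𝓝 (Nl ^ p + Nr ^ p)) := by
    have c1 : ContinuousAt (fun x : ℝ => x ^ p) Nl :=
      Real.continuousAt_rpow_const Nl p (Or.inr hp0.le)
    have c2 : ContinuousAt (fun x : ℝ => x ^ p) Nr :=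
      Real.continuousAt_rpow_const Nr p (Or.inr hp0.le)
    have t1 : Tendsto (fun ε : ℝ => Nl + 2*ε) (𝓝 0) (𝓝 Nl) := by
      have h : Continuous (fun ε : ℝ => Nl + 2*ε) := by continuity
      simpa using h.tendsto (0:ℝ)
    have t2 : Tendsto (fun ε : ℝ => Nr + 2*ε) (𝓝 0) (𝓝 Nr) := by
      have h : Continuous (fun ε : ℝ => Nr + 2*ε) := by continuity
      simpa using h.tendsto (0:ℝ)
    have h := (c1.tendsto.comp t1).add (c2.tendsto.comp t2)
    exact (h.mono_left nhdsWithin_le_nhds)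
  exact ge_of_tendsto hcont (eventually_nhdsWithin_of_forall hkey)
end

section
/- For 1 < p < ∞ and any v in the p-variation space V^p(ℝ) and any h > 0, the translated difference satisfies ‖v(·+h) − v‖_{L^p(ℝ)} ≤ C h^{1/p} ‖v‖_{V^p} for a universal constant C (one may take C = 4^{1/p}). -/
open MeasureTheory Set

/-- The set of `p`-variation sums of `v` on the whole line: for each finite increasing
tuple `t₀ < ⋯ < t_N` the quantity `(Σ_{j<N} |v(t_{j+1}) − v(t_j)|^p + |v(t_N)|^p)^{1/p}`
(the last term implements the convention `v(+∞) = 0`). -/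
def varSumsR (p : ℝ) (v : ℝ → ℂ) : Set ℝ :=
  { S | ∃ (N : ℕ) (t : ℕ → ℝ), StrictMono t ∧
      S = (∑ j ∈ Finset.range N, ‖v (t (j + 1)) - v (t j)‖ ^ p + ‖v (t N)‖ ^ p) ^ p⁻¹ }

/-- The `V^p(ℝ)` norm. -/
noncomputable def VpNormR (p : ℝ) (v : ℝ → ℂ) : ℝ := sSup (varSumsR p v)

/-- Superadditivity of the lower Lebesgue integral over finite sums (no measurability
assumptions). -/
lemma finset_sum_le_lintegral {ι : Type*} (μ : Measure ℝ) (F : Finset ι)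
    (f : ι → ℝ → ENNReal) :
    ∑ k ∈ F, ∫⁻ y, f k y ∂μ ≤ ∫⁻ y, ∑ k ∈ F, f k y ∂μ := by
  classical
  induction F using Finset.induction with
  | empty => simp
  | insert a s hk ih =>
    rw [Finset.sum_insert hk]
    refine le_trans (add_le_add_right ih _) ?_
    refine le_trans (le_lintegral_add _ _) (le_of_eq ?_)
    refine lintegral_congr fun y => ?_
    rw [Finset.sum_insert hk]

/-- For `1 < p < ∞`, `v ∈ V^p(ℝ)` and `h > 0`,
`‖v(·+h) − v‖_{L^p(ℝ)} ≤ C h^{1/p} ‖v‖_{V^p}` with the universal constant `C = 4^{1/p}`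
(in particular the left-hand side is finite). -/
theorem stmt_13 (p : ℝ) (hp : 1 < p) (v : ℝ → ℂ) (h : ℝ) (hh : 0 < h)
    (hbd : BddAbove (varSumsR p v)) :
    eLpNorm (fun x => v (x + h) - v x) (ENNReal.ofReal p) volume
      ≤ ENNReal.ofReal ((4 : ℝ) ^ p⁻¹ * h ^ p⁻¹ * VpNormR p v) := by
  have hp0 : (0:ℝ) < p := lt_trans one_pos hp
  have hpne : p ≠ 0 := hp0.ne'
  have hpinv : (0:ℝ) ≤ p⁻¹ := inv_nonneg.mpr hp0.le
  set M := VpNormR p v with hMdef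
  -- `M ≥ 0`
  have hmem0 : (‖v 0‖ ^ p) ^ p⁻¹ ∈ varSumsR p v := ⟨0, (fun j => (j:ℝ)), Nat.strictMono_cast, by simp⟩
  have hM0 : (0:ℝ) ≤ M :=
    le_trans (Real.rpow_nonneg (by positivity) _) (le_csSup hbd hmem0)
  -- Key pointwise estimate along arithmetic progressions (natural index)
  have keyA : ∀ (x : ℝ) (N : ℕ),
      ∑ j ∈ Finset.range N, ‖v (x + ((j:ℝ)+1)*h) - v (x + (j:ℝ)*h)‖ ^ p ≤ M ^ p := by
    intro x N
    set t : ℕ → ℝ := fun j => x + (j:ℝ) * h with ht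
    have htmono : StrictMono t := by
      intro a b hab
      have hab' : (a:ℝ) < b := by exact_mod_cast hab
      simp only [ht]
      nlinarith
    have hS : (∑ j ∈ Finset.range N, ‖v (t (j+1)) - v (t j)‖ ^ p + ‖v (t N)‖ ^ p) ^ p⁻¹
        ∈ varSumsR p v := ⟨N, t, htmono, rfl⟩
    have hle := le_csSup hbd hS
    have hnn : (0:ℝ) ≤ ∑ j ∈ Finset.range N, ‖v (t (j+1)) - v (t j)‖ ^ p + ‖v (t N)‖ ^ p := by
      positivity
    have hpow := Real.rpow_le_rpow (Real.rpow_nonneg hnn _) hle hp0.le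
    rw [Real.rpow_inv_rpow hnn hpne] at hpow
    calc ∑ j ∈ Finset.range N, ‖v (x + ((j:ℝ)+1)*h) - v (x + (j:ℝ)*h)‖ ^ p
        = ∑ j ∈ Finset.range N, ‖v (t (j+1)) - v (t j)‖ ^ p := by
          refine Finset.sum_congr rfl fun j _ => ?_
          have h1 : t (j+1) = x + ((j:ℝ)+1)*h := by simp only [ht]; push_cast; ring
          have h2 : t j = x + (j:ℝ)*h := rfl
          rw [h1, h2]
      _ ≤ ∑ j ∈ Finset.range N, ‖v (t (j+1)) - v (t j)‖ ^ p + ‖v (t N)‖ ^ p :=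
          le_add_of_nonneg_right (by positivity)
      _ ≤ M ^ p := hpow
  -- version for finite sets of integers
  have keyB : ∀ (x : ℝ) (F : Finset ℤ),
      ∑ k ∈ F, ‖v (x + ((k:ℝ)+1)*h) - v (x + (k:ℝ)*h)‖ ^ p ≤ M ^ p := by
    intro x F
    obtain ⟨n, hn⟩ : ∃ n : ℕ, ∀ k ∈ F, k ∈ Finset.Icc (-(n:ℤ)) n := by
      refine ⟨F.sup fun k => k.natAbs, fun k hk => ?_⟩
      have hle : k.natAbs ≤ F.sup fun k => k.natAbs := Finset.le_sup hk
      simp only [Finset.mem_Icc]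
      omega
    calc ∑ k ∈ F, ‖v (x + ((k:ℝ)+1)*h) - v (x + (k:ℝ)*h)‖ ^ p
        ≤ ∑ k ∈ Finset.Icc (-(n:ℤ)) n, ‖v (x + ((k:ℝ)+1)*h) - v (x + (k:ℝ)*h)‖ ^ p :=
          Finset.sum_le_sum_of_subset_of_nonneg (fun k hk => hn k hk)
            (fun _ _ _ => by positivity)
      _ = ∑ j ∈ Finset.range (2*n+1),
            ‖v ((x - (n:ℝ)*h) + ((j:ℝ)+1)*h) - v ((x - (n:ℝ)*h) + (j:ℝ)*h)‖ ^ p := by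
          refine Finset.sum_nbij' (fun k => (k + (n:ℤ)).toNat) (fun j => (j:ℤ) - n)
            ?_ ?_ ?_ ?_ ?_
          · intro k hk
            simp only [Finset.mem_Icc] at hk
            simp only [Finset.mem_range]
            omega
          · intro j hj
            simp only [Finset.mem_range] at hj
            simp only [Finset.mem_Icc]
            omega
          · intro k hk
            simp only [Finset.mem_Icc] at hk
            show ((k + (n:ℤ)).toNat : ℤ) - n = k
            omega
          · intro j hj
            show (((j:ℤ) - n + n).toNat) = j
            omega
          · intro k hk
            simp only [Finset.mem_Icc] at hk
            have hc : (((k + (n:ℤ)).toNat : ℝ)) = (k:ℝ) + n := by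
              have := Int.toNat_of_nonneg (by omega : (0:ℤ) ≤ k + n)
              exact_mod_cast congrArg (fun z : ℤ => (z:ℝ)) this
            congr 3 <;> rw [hc] <;> ring_nf
      _ ≤ M ^ p := keyA _ _
  -- the integrand
  set g : ℝ → ENNReal := fun x => (‖v (x + h) - v x‖₊ : ENNReal) ^ p with hg
  -- pointwise bound on [0,h)
  have hptwise : ∀ (y : ℝ) (F : Finset ℤ),
      ∑ k ∈ F, g (y + (k:ℝ)*h) ≤ ENNReal.ofReal (M ^ p) := by
    intro y F
    have hterm : ∀ k : ℤ, g (y + (k:ℝ)*h)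
        = ENNReal.ofReal (‖v (y + ((k:ℝ)+1)*h) - v (y + (k:ℝ)*h)‖ ^ p) := by
      intro k
      have harg : y + (k:ℝ)*h + h = y + ((k:ℝ)+1)*h := by ring
      simp only [hg, harg]
      rw [← enorm_eq_nnnorm, ← ofReal_norm, ENNReal.ofReal_rpow_of_nonneg (norm_nonneg _) hp0.le]
    calc ∑ k ∈ F, g (y + (k:ℝ)*h)
        = ENNReal.ofReal (∑ k ∈ F, ‖v (y + ((k:ℝ)+1)*h) - v (y + (k:ℝ)*h)‖ ^ p) := by
          rw [ENNReal.ofReal_sum_of_nonneg (fun _ _ => by positivity)]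
          exact Finset.sum_congr rfl fun k _ => hterm k
      _ ≤ ENNReal.ofReal (M ^ p) := ENNReal.ofReal_le_ofReal (keyB y F)
  -- covering of ℝ by translated intervals
  have hcover : (⋃ k : ℤ, Ico ((k:ℝ)*h) ((k:ℝ)*h + h)) = univ := by
    ext x
    simp only [mem_iUnion, mem_Ico, mem_univ, iff_true]
    refine ⟨⌊x/h⌋, ?_, ?_⟩
    · have h1 : ((⌊x/h⌋:ℝ)) ≤ x/h := Int.floor_le _
      have := mul_le_mul_of_nonneg_right h1 hh.le
      rwa [div_mul_cancel₀ _ hh.ne'] at this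
    · have h1 : x/h < (⌊x/h⌋:ℝ) + 1 := Int.lt_floor_add_one _
      have := mul_lt_mul_of_pos_right h1 hh
      rw [div_mul_cancel₀ _ hh.ne'] at this
      nlinarith
  have hdisj : Pairwise (Function.onFun Disjoint fun k : ℤ => Ico ((k:ℝ)*h) ((k:ℝ)*h + h)) := by
    intro a b hab
    simp only [Function.onFun]
    rw [Set.Ico_disjoint_Ico]
    rcases lt_or_gt_of_ne hab with hlt | hlt
    · have : (a:ℝ) + 1 ≤ b := by exact_mod_cast hlt
      refine le_trans (min_le_left _ _) (le_trans ?_ (le_max_right _ _))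
      nlinarith
    · have : (b:ℝ) + 1 ≤ a := by exact_mod_cast hlt
      refine le_trans (min_le_right _ _) (le_trans ?_ (le_max_left _ _))
      nlinarith
  -- decomposition of the integral
  have hdecomp : ∫⁻ x, g x
      = ∑' k : ℤ, ∫⁻ x in Ico ((k:ℝ)*h) ((k:ℝ)*h + h), g x := by
    conv_lhs => rw [← setLIntegral_univ, ← hcover]
    rw [Measure.restrict_iUnion hdisj (fun k => measurableSet_Ico), lintegral_sum_measure]
  -- translation of each interval to [0, h)
  have htrans : ∀ k : ℤ, ∫⁻ x in Ico ((k:ℝ)*h) ((k:ℝ)*h + h), g x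
      = ∫⁻ y in Ico (0:ℝ) h, g (y + (k:ℝ)*h) := by
    intro k
    have hmp : MeasurePreserving (fun y : ℝ => y + (k:ℝ)*h) volume volume :=
      measurePreserving_add_right volume _
    have hemb : MeasurableEmbedding (fun y : ℝ => y + (k:ℝ)*h) :=
      (MeasurableEquiv.addRight ((k:ℝ)*h)).measurableEmbedding
    have hkey := hmp.setLIntegral_comp_emb hemb g (Ico 0 h)
    rw [Set.image_add_const_Ico, zero_add, add_comm h ((k:ℝ)*h)] at hkey
    exact hkey.symm
  -- the main integral bound
  have hbound : ∫⁻ x, g x ≤ ENNReal.ofReal (M ^ p) * ENNReal.ofReal h := by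
    rw [hdecomp, ENNReal.tsum_eq_iSup_sum]
    refine iSup_le fun F => ?_
    calc ∑ k ∈ F, ∫⁻ x in Ico ((k:ℝ)*h) ((k:ℝ)*h + h), g x
        = ∑ k ∈ F, ∫⁻ y in Ico (0:ℝ) h, g (y + (k:ℝ)*h) :=
          Finset.sum_congr rfl fun k _ => htrans k
      _ ≤ ∫⁻ y in Ico (0:ℝ) h, ∑ k ∈ F, g (y + (k:ℝ)*h) :=
          finset_sum_le_lintegral _ F _
      _ ≤ ∫⁻ _ in Ico (0:ℝ) h, ENNReal.ofReal (M ^ p) :=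
          lintegral_mono fun y => hptwise y F
      _ = ENNReal.ofReal (M ^ p) * volume (Ico (0:ℝ) h) := setLIntegral_const _ _
      _ = ENNReal.ofReal (M ^ p) * ENNReal.ofReal h := by
          rw [Real.volume_Ico, sub_zero]
  -- conclude
  have hpe0 : ENNReal.ofReal p ≠ 0 := (ENNReal.ofReal_pos.mpr hp0).ne'
  rw [eLpNorm_eq_lintegral_rpow_enorm_toReal hpe0 ENNReal.ofReal_ne_top]
  rw [ENNReal.toReal_ofReal hp0.le, one_div]
  calc (∫⁻ x, (‖v (x + h) - v x‖₊ : ENNReal) ^ p) ^ p⁻¹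
      ≤ (ENNReal.ofReal (M ^ p) * ENNReal.ofReal h) ^ p⁻¹ :=
        ENNReal.rpow_le_rpow hbound hpinv
    _ = ENNReal.ofReal ((M ^ p * h) ^ p⁻¹) := by
        rw [← ENNReal.ofReal_mul (by positivity),
          ENNReal.ofReal_rpow_of_nonneg (by positivity) hpinv]
    _ ≤ ENNReal.ofReal ((4:ℝ) ^ p⁻¹ * h ^ p⁻¹ * M) := by
        refine ENNReal.ofReal_le_ofReal ?_
        rw [Real.mul_rpow (by positivity) hh.le, Real.rpow_rpow_inv hM0 hpne]
        have h4 : (1:ℝ) ≤ (4:ℝ) ^ p⁻¹ := Real.one_le_rpow (by norm_num) hpinv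
        have hhn : (0:ℝ) ≤ h ^ p⁻¹ * M := mul_nonneg (Real.rpow_nonneg hh.le p⁻¹) hM0
        nlinarith [mul_le_mul_of_nonneg_right h4 hhn]
end

section
/- (Interpolation between U^p and U^q via V^p.) Let 1 < p < q < ∞. There is a constant C such that for every right-continuous v ∈ V^p and every M > 1 there exist u ∈ U^p and w ∈ U^q with v = u + w and (1/M)‖u‖_{U^p} + e^{M}‖w‖_{U^q} ≤ C ‖v‖_{V^p}. In particular, V^p_{rc} ⊂ U^q with a norm bound. -/
open MeasureTheory Set Filter

/-- A `U^p` atom on `ℝ`. -/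
def IsUpAtomR (p : ℝ) (u : ℝ → ℂ) : Prop :=
  ∃ (N : ℕ) (t : ℕ → ℝ) (φ : ℕ → ℂ),
    StrictMono t ∧ (∑ j ∈ Finset.range N, ‖φ j‖ ^ p) ≤ 1 ∧
      ∀ x : ℝ, u x = ∑ j ∈ Finset.range N,
        if t j ≤ x ∧ (j + 1 = N ∨ x < t (j + 1)) then φ j else 0

/-- Sums `Σ_j |c_j|` over `ℓ¹`-atomic decompositions of `u` on `ℝ`. -/
def upDecompSumsR (p : ℝ) (u : ℝ → ℂ) : Set ℝ :=
  { S | ∃ (c : ℕ → ℂ) (A : ℕ → ℝ → ℂ),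
      (∀ j, IsUpAtomR p (A j)) ∧ Summable (fun j => ‖c j‖) ∧
      (∀ x : ℝ, HasSum (fun j => c j * A j x) (u x)) ∧
      S = ∑' j, ‖c j‖ }

/-- The `U^p(ℝ)` (atomic) norm. -/
noncomputable def UpNormR (p : ℝ) (u : ℝ → ℂ) : ℝ := sInf (upDecompSumsR p u)

namespace Stmt15
open scoped Classical
noncomputable section

def psum (p : ℝ) (v : ℝ → ℂ) (t : ℕ → ℝ) (N : ℕ) : ℝ :=
  ∑ j ∈ Finset.range N, ‖v (t (j + 1)) - v (t j)‖ ^ p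
def omSet (p : ℝ) (v : ℝ → ℂ) (x : ℝ) : Set ℝ :=
  { S | ∃ N t, StrictMono t ∧ t N ≤ x ∧ S = psum p v t N }
def om (p : ℝ) (v : ℝ → ℂ) (x : ℝ) : ℝ := sSup (omSet p v x)
def stp (p : ℝ) (v : ℝ → ℂ) (θ : ℝ) : ℝ := sInf { x | θ ≤ om p v x }

variable {p q : ℝ} {v : ℝ → ℂ}

lemma rpow_root_le {a b : ℝ} (hp : 1 < p) (ha : 0 ≤ a) (h : a ^ p ≤ b) : a ≤ b ^ p⁻¹ := by
  have hp0 : p ≠ 0 := by positivity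
  calc a = (a ^ p) ^ p⁻¹ := (Real.rpow_rpow_inv ha hp0).symm
  _ ≤ b ^ p⁻¹ := Real.rpow_le_rpow (Real.rpow_nonneg ha p) h (by positivity)

lemma rpow_le_of_root_le {a b : ℝ} (hp : 1 < p) (ha : 0 ≤ a) (hb : 0 ≤ b)
    (h : a ≤ b ^ p⁻¹) : a ^ p ≤ b := by
  have hp0 : p ≠ 0 := by positivity
  calc a ^ p ≤ (b ^ p⁻¹) ^ p := Real.rpow_le_rpow ha h (by positivity)
  _ = b := Real.rpow_inv_rpow hb hp0

lemma le_rpow_of_root {a b : ℝ} (hp : 1 < p) (ha : 0 ≤ a) (hb : 0 ≤ b)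
    (h : a ^ p⁻¹ ≤ b) : a ≤ b ^ p := by
  have hp0 : p ≠ 0 := by positivity
  calc a = (a ^ p⁻¹) ^ p := (Real.rpow_inv_rpow ha hp0).symm
  _ ≤ b ^ p := Real.rpow_le_rpow (Real.rpow_nonneg ha _) h (by positivity)

lemma psum_nonneg (t : ℕ → ℝ) (N : ℕ) : 0 ≤ psum p v t N := by
  apply Finset.sum_nonneg; intro j _; exact Real.rpow_nonneg (norm_nonneg _) p

lemma varSums_nonempty : (varSumsR p v).Nonempty :=
  ⟨_, 0, (fun n => (n : ℝ)), Nat.strictMono_cast, rfl⟩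

lemma varSums_nonneg {S : ℝ} (hS : S ∈ varSumsR p v) : 0 ≤ S := by
  obtain ⟨N, t, ht, rfl⟩ := hS
  exact Real.rpow_nonneg (by positivity) _

lemma Vp_nonneg : 0 ≤ VpNormR p v :=
  Real.sSup_nonneg (fun _ h => varSums_nonneg h)

section basic
variable (hp : 1 < p) (hbdd : BddAbove (varSumsR p v))

include hp hbdd in
lemma psum_tail_le {t : ℕ → ℝ} (ht : StrictMono t) (N : ℕ) :
    psum p v t N + ‖v (t N)‖ ^ p ≤ VpNormR p v ^ p := by
  have hmem : (psum p v t N + ‖v (t N)‖ ^ p) ^ p⁻¹ ∈ varSumsR p v := ⟨N, t, ht, rfl⟩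
  have hle : (psum p v t N + ‖v (t N)‖ ^ p) ^ p⁻¹ ≤ VpNormR p v := le_csSup hbdd hmem
  exact le_rpow_of_root hp (add_nonneg (psum_nonneg t N) (Real.rpow_nonneg (norm_nonneg _) p)) Vp_nonneg hle

include hp hbdd in
lemma psum_le {t : ℕ → ℝ} (ht : StrictMono t) (N : ℕ) :
    psum p v t N ≤ VpNormR p v ^ p := by
  have := psum_tail_le hp hbdd ht N
  have h2 : 0 ≤ ‖v (t N)‖ ^ p := Real.rpow_nonneg (norm_nonneg _) p
  linarith

lemma omSet_nonempty (x : ℝ) : (omSet p v x).Nonempty := by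
  refine ⟨0, 0, fun n => (x - 1) + n, ?_, by simp, by simp [psum]⟩
  exact fun a b h => by simpa using (Nat.cast_lt (α := ℝ)).2 h

include hp hbdd in
lemma omSet_bddAbove (x : ℝ) : BddAbove (omSet p v x) := by
  refine ⟨VpNormR p v ^ p, ?_⟩
  rintro S ⟨N, t, ht, -, rfl⟩
  exact psum_le hp hbdd ht N

lemma om_nonneg (x : ℝ) : 0 ≤ om p v x := by
  apply Real.sSup_nonneg
  rintro S ⟨N, t, ht, -, rfl⟩
  exact psum_nonneg t N

include hp hbdd in
lemma om_le (x : ℝ) : om p v x ≤ VpNormR p v ^ p := by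
  apply csSup_le (omSet_nonempty x)
  rintro S ⟨N, t, ht, -, rfl⟩
  exact psum_le hp hbdd ht N

include hp hbdd in
lemma om_mono {x y : ℝ} (hxy : x ≤ y) : om p v x ≤ om p v y := by
  apply csSup_le_csSup (omSet_bddAbove hp hbdd y) (omSet_nonempty x)
  rintro S ⟨N, t, ht, htN, rfl⟩
  exact ⟨N, t, ht, htN.trans hxy, rfl⟩

lemma append (t : ℕ → ℝ) (N : ℕ) (ht : StrictMono t) {y : ℝ} (hy : t N < y) :
    ∃ t' : ℕ → ℝ, StrictMono t' ∧ (∀ j ≤ N, t' j = t j) ∧ t' (N + 1) = y ∧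
      psum p v t' (N + 1) = psum p v t N + ‖v y - v (t N)‖ ^ p := by
  set t' : ℕ → ℝ := fun j => if j ≤ N then t j else y + (j - (N + 1) : ℕ) with ht'
  have heq : ∀ j ≤ N, t' j = t j := fun j hj => by simp [ht', hj]
  have hN1 : t' (N + 1) = y := by simp [ht']
  have hmono : StrictMono t' := by
    apply strictMono_nat_of_lt_succ
    intro j
    rcases lt_trichotomy j N with h | h | h
    · rw [heq j h.le, heq (j + 1) h]
      exact ht (Nat.lt_succ_self j)
    · subst h
      rw [heq j le_rfl, hN1]
      exact hy
    · have h1 : ¬ (j ≤ N) := by omega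
      have h2 : ¬ (j + 1 ≤ N) := by omega
      simp only [ht', if_neg h1, if_neg h2]
      have : (j - (N+1) : ℕ) < (j + 1 - (N+1) : ℕ) := by omega
      have := (Nat.cast_lt (α := ℝ)).2 this
      linarith
  refine ⟨t', hmono, heq, hN1, ?_⟩
  have hps : psum p v t' N = psum p v t N := by
    apply Finset.sum_congr rfl
    intro j hj
    have hj' := Finset.mem_range.1 hj
    rw [heq j hj'.le, heq (j + 1) hj']
  rw [psum, Finset.sum_range_succ, ← psum, hps, hN1, heq N le_rfl]

include hp hbdd in
lemma om_superadd {x y : ℝ} (hxy : x < y) :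
    om p v x + ‖v y - v x‖ ^ p ≤ om p v y := by
  set d := ‖v y - v x‖ ^ p with hd
  have key : ∀ S ∈ omSet p v x, S + d ≤ om p v y := by
    rintro S ⟨N, t, ht, htN, rfl⟩
    rcases htN.lt_or_eq with hlt | heq
    · obtain ⟨t1, h1m, h1e, h1N, h1s⟩ := append (p := p) (v := v) t N ht hlt
      have h2 : t1 (N + 1) < y := by rw [h1N]; exact hxy
      obtain ⟨t2, h2m, h2e, h2N, h2s⟩ := append (p := p) (v := v) t1 (N + 1) h1m h2
      have hmem : psum p v t2 (N + 2) ∈ omSet p v y := ⟨N + 2, t2, h2m, by rw [h2N], rfl⟩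
      have : psum p v t2 (N + 2) ≤ om p v y := le_csSup (omSet_bddAbove hp hbdd y) hmem
      rw [h2s, h1s, h1N] at this
      have hnn : 0 ≤ ‖v x - v (t N)‖ ^ p := Real.rpow_nonneg (norm_nonneg _) p
      linarith
    · obtain ⟨t1, h1m, h1e, h1N, h1s⟩ := append (p := p) (v := v) t N ht (heq ▸ hxy)
      have hmem : psum p v t1 (N + 1) ∈ omSet p v y := ⟨N + 1, t1, h1m, by rw [h1N], rfl⟩
      have : psum p v t1 (N + 1) ≤ om p v y := le_csSup (omSet_bddAbove hp hbdd y) hmem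
      rw [h1s, heq] at this
      linarith
  have : om p v x ≤ om p v y - d := by
    apply csSup_le (omSet_nonempty x)
    intro S hS
    linarith [key S hS]
  linarith

include hp hbdd in
lemma om_tail (x : ℝ) : om p v x + ‖v x‖ ^ p ≤ VpNormR p v ^ p := by
  have key : ∀ S ∈ omSet p v x, S + ‖v x‖ ^ p ≤ VpNormR p v ^ p := by
    rintro S ⟨N, t, ht, htN, rfl⟩
    rcases htN.lt_or_eq with hlt | heq
    · obtain ⟨t1, h1m, h1e, h1N, h1s⟩ := append (p := p) (v := v) t N ht hlt
      have := psum_tail_le hp hbdd h1m (N + 1)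
      rw [h1s, h1N] at this
      have hnn : 0 ≤ ‖v x - v (t N)‖ ^ p := Real.rpow_nonneg (norm_nonneg _) p
      linarith
    · have := psum_tail_le hp hbdd ht N
      rw [heq] at this
      linarith
  have : om p v x ≤ VpNormR p v ^ p - ‖v x‖ ^ p := by
    apply csSup_le (omSet_nonempty x)
    intro S hS
    linarith [key S hS]
  linarith

include hp hbdd in
lemma norm_v_le (x : ℝ) : ‖v x‖ ≤ VpNormR p v := by
  have h := om_tail hp hbdd (v := v) x
  have h2 := om_nonneg (p := p) (v := v) x
  have : ‖v x‖ ^ p ≤ VpNormR p v ^ p := by linarith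
  have := rpow_root_le hp (norm_nonneg _) this
  rwa [Real.rpow_rpow_inv Vp_nonneg (by positivity)] at this

include hp hbdd in
lemma norm_v_le_om (h0 : Tendsto v atBot (nhds 0)) (x : ℝ) :
    ‖v x‖ ^ p ≤ om p v x := by
  have key : ‖v x‖ ≤ om p v x ^ p⁻¹ := by
    apply le_of_forall_pos_le_add
    intro ε hε
    have hev : ∀ᶠ t in atBot, dist (v t) 0 < ε := Metric.tendsto_nhds.mp h0 ε hε
    obtain ⟨a, ha⟩ := eventually_atBot.1 hev
    set t₀ := min a (x - 1) with ht₀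
    have h1 : dist (v t₀) 0 < ε := ha t₀ (min_le_left _ _)
    have h2 : t₀ < x := lt_of_le_of_lt (min_le_right _ _) (by linarith)
    -- two-point partition
    set t : ℕ → ℝ := fun n => t₀ + n * (x - t₀) with htdef
    have hmono : StrictMono t := by
      apply strictMono_nat_of_lt_succ
      intro n
      simp only [htdef]
      have : (n : ℝ) < (n + 1 : ℕ) := by exact_mod_cast Nat.lt_succ_self n
      nlinarith [sub_pos.2 h2]
    have ht1 : t 1 = x := by simp [htdef]
    have ht0 : t 0 = t₀ := by simp [htdef]
    have hmem : psum p v t 1 ∈ omSet p v x := ⟨1, t, hmono, by rw [ht1], rfl⟩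
    have hle : psum p v t 1 ≤ om p v x := le_csSup (omSet_bddAbove hp hbdd x) hmem
    have hps : psum p v t 1 = ‖v x - v t₀‖ ^ p := by
      rw [psum, Finset.sum_range_one, ht1, ht0]
    rw [hps] at hle
    have hroot : ‖v x - v t₀‖ ≤ om p v x ^ p⁻¹ := rpow_root_le hp (norm_nonneg _) hle
    have : ‖v x‖ ≤ ‖v x - v t₀‖ + ‖v t₀‖ := by
      calc ‖v x‖ = ‖(v x - v t₀) + v t₀‖ := by ring_nf
      _ ≤ _ := norm_add_le _ _
    rw [dist_zero_right] at h1
    linarith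
  exact rpow_le_of_root_le hp (norm_nonneg _) (om_nonneg x) key

lemma glue (t0 t : ℕ → ℝ) (M N : ℕ) (h0 : StrictMono t0) (ht : StrictMono t)
    (hlt : t0 M < t 0) :
    ∃ t'' : ℕ → ℝ, StrictMono t'' ∧
      psum p v t0 M + psum p v t N ≤ psum p v t'' (M + 1 + N) := by
  set t'' : ℕ → ℝ := fun j => if j ≤ M then t0 j else t (j - (M + 1)) with ht''
  have he1 : ∀ j ≤ M, t'' j = t0 j := fun j hj => by simp [ht'', hj]
  have he2 : ∀ i : ℕ, t'' (M + 1 + i) = t i := by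
    intro i
    have h1 : ¬ (M + 1 + i ≤ M) := by omega
    have h2 : M + 1 + i - (M + 1) = i := by omega
    simp [ht'', h1, h2]
  have hmono : StrictMono t'' := by
    apply strictMono_nat_of_lt_succ
    intro j
    rcases lt_trichotomy j M with h | h | h
    · rw [he1 j h.le, he1 (j + 1) h]; exact h0 (Nat.lt_succ_self j)
    · have hj : t'' j = t0 M := by rw [h]; exact he1 M le_rfl
      have hj1 : t'' (j + 1) = t 0 := by rw [h]; simpa using he2 0
      rw [hj, hj1]; exact hlt
    · have h1 : ¬ (j ≤ M) := by omega
      have h2 : ¬ (j + 1 ≤ M) := by omega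
      simp only [ht'', if_neg h1, if_neg h2]
      exact ht (by omega)
  refine ⟨t'', hmono, ?_⟩
  have hfirst : psum p v t'' M = psum p v t0 M := by
    apply Finset.sum_congr rfl
    intro j hj
    have hj' := Finset.mem_range.1 hj
    rw [he1 j hj'.le, he1 (j + 1) hj']
  have key : ∀ n : ℕ, psum p v t0 M + psum p v t n ≤ psum p v t'' (M + 1 + n) := by
    intro n
    induction n with
    | zero =>
      have : psum p v t'' (M + 1) = psum p v t'' M + ‖v (t'' (M + 1)) - v (t'' M)‖ ^ p := by
        rw [psum, Finset.sum_range_succ]; rfl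
      have hnn : 0 ≤ ‖v (t'' (M + 1)) - v (t'' M)‖ ^ p := Real.rpow_nonneg (norm_nonneg _) p
      have hz : psum p v t 0 = 0 := by simp [psum]
      rw [hz, this, hfirst]
      linarith
    | succ n ih =>
      have harith : M + 1 + (n + 1) = (M + 1 + n) + 1 := by omega
      have hs : psum p v t'' (M + 1 + (n + 1)) =
          psum p v t'' (M + 1 + n) + ‖v (t'' (M + 1 + n + 1)) - v (t'' (M + 1 + n))‖ ^ p := by
        rw [harith, psum, Finset.sum_range_succ]; rfl
      have h1 : t'' (M + 1 + n + 1) = t (n + 1) := by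
        have : M + 1 + n + 1 = M + 1 + (n + 1) := by omega
        rw [this, he2]
      have h2 : t'' (M + 1 + n) = t n := he2 n
      have hps : psum p v t (n + 1) = psum p v t n + ‖v (t (n + 1)) - v (t n)‖ ^ p := by
        rw [psum, Finset.sum_range_succ]; rfl
      rw [hs, h1, h2, hps]
      linarith
  exact key N

include hp hbdd in
lemma S_bddBelow {θ : ℝ} (hθ : 0 < θ) : BddBelow { x | θ ≤ om p v x } := by
  by_contra hnb
  rw [not_bddBelow_iff] at hnb
  have key : ∀ n : ℕ, ∃ (N : ℕ) (t : ℕ → ℝ), StrictMono t ∧ (n : ℝ) * (θ / 2) ≤ psum p v t N := by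
    intro n
    induction n with
    | zero => exact ⟨0, (fun n => (n : ℝ)), Nat.strictMono_cast, by simp [psum]⟩
    | succ n ih =>
      obtain ⟨N, t, ht, hle⟩ := ih
      obtain ⟨x, hx, hxlt⟩ := hnb (t 0)
      have hom : θ ≤ om p v x := hx
      have hlt2 : θ / 2 < om p v x := by linarith
      obtain ⟨S, hS, hS2⟩ := exists_lt_of_lt_csSup (omSet_nonempty x) hlt2
      obtain ⟨M, t0, h0, h0M, rfl⟩ := hS
      have hlt3 : t0 M < t 0 := lt_of_le_of_lt h0M hxlt
      obtain ⟨t'', hm, hge⟩ := glue (p := p) (v := v) t0 t M N h0 ht hlt3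
      refine ⟨M + 1 + N, t'', hm, ?_⟩
      push_cast
      linarith
  obtain ⟨n, hn⟩ := exists_nat_gt (VpNormR p v ^ p / (θ / 2))
  obtain ⟨N, t, ht, hge⟩ := key n
  have h1 : VpNormR p v ^ p < (n : ℝ) * (θ / 2) := by
    rw [div_lt_iff₀ (by linarith)] at hn
    linarith
  have := psum_le hp hbdd ht N
  linarith

include hp hbdd in
lemma stp_le {θ : ℝ} (hθ : 0 < θ) {x : ℝ} (hx : θ ≤ om p v x) : stp p v θ ≤ x :=
  csInf_le (S_bddBelow hp hbdd hθ) hx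

include hp hbdd in
lemma stp_mono {θ θ' : ℝ} (hθ : 0 < θ) (hle : θ ≤ θ')
    (hne : { x | θ' ≤ om p v x }.Nonempty) : stp p v θ ≤ stp p v θ' := by
  apply csInf_le_csInf (S_bddBelow hp hbdd hθ) hne
  intro x hx
  exact le_trans hle hx

include hp hbdd in
lemma lemC (hrc : ∀ x : ℝ, ContinuousWithinAt v (Set.Ici x) x)
    {θ : ℝ} (hθ : 0 < θ) (hne : { x | θ ≤ om p v x }.Nonempty)
    {x : ℝ} (hx : stp p v θ ≤ x) :
    ‖v x - v (stp p v θ)‖ ^ p ≤ max (om p v x - θ) 0 := by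
  have hp0 : p ≠ 0 := by positivity
  set s := stp p v θ with hs
  rcases hx.lt_or_eq with hlt | heq
  · have key : ‖v x - v s‖ ≤ (max (om p v x - θ) 0) ^ p⁻¹ := by
      apply le_of_forall_pos_le_add
      intro ε hε
      obtain ⟨δ, hδ, hδ2⟩ := Metric.continuousWithinAt_iff.1 (hrc s) ε hε
      have hsinf : s < min x (s + δ) := lt_min hlt (by linarith)
      obtain ⟨a, ha, halt⟩ := exists_lt_of_csInf_lt hne hsinf
      have hsa : s ≤ a := csInf_le (S_bddBelow hp hbdd hθ) ha
      have hdista : dist (v a) (v s) < ε := by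
        apply hδ2 (mem_Ici.2 hsa)
        rw [Real.dist_eq, abs_of_nonneg (by linarith)]
        have := lt_of_lt_of_le halt (min_le_right _ _)
        linarith
      have hax : a < x := lt_of_lt_of_le (lt_of_lt_of_le halt (min_le_left _ _)) le_rfl
      have hsup := om_superadd hp hbdd hax
      have hωa : θ ≤ om p v a := ha
      have h1 : ‖v x - v a‖ ^ p ≤ max (om p v x - θ) 0 := by
        have : ‖v x - v a‖ ^ p ≤ om p v x - θ := by linarith
        exact this.trans (le_max_left _ _)
      have h2 : ‖v x - v a‖ ≤ (max (om p v x - θ) 0) ^ p⁻¹ :=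
        rpow_root_le hp (norm_nonneg _) h1
      calc ‖v x - v s‖ ≤ ‖v x - v a‖ + ‖v a - v s‖ := by
            have : v x - v s = (v x - v a) + (v a - v s) := by ring
            rw [this]; exact norm_add_le _ _
      _ ≤ (max (om p v x - θ) 0) ^ p⁻¹ + ε := by
            rw [← dist_eq_norm (v a) (v s)]
            linarith
    exact rpow_le_of_root_le hp (norm_nonneg _) (le_max_right _ _) key
  · rw [← heq]
    simp [Real.zero_rpow hp0]


end basic

lemma zero_atom {r : ℝ} (hr : 1 ≤ r) : IsUpAtomR r (fun _ => 0) :=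
  ⟨0, (fun n => (n : ℝ)), fun _ => 0, Nat.strictMono_cast, by simp, fun x => by simp⟩

lemma step_atom {r : ℝ} (hr : 1 ≤ r) (B : Finset ℝ) (f : ℝ → ℂ) {c : ℝ} (hc : 0 ≤ c)
    (H1 : ∀ x : ℝ, (∀ b ∈ B, ¬ b ≤ x) → f x = 0)
    (H2 : ∀ x y : ℝ, x ≤ y → (∀ b ∈ B, b ≤ y → b ≤ x) → f y = f x)
    (hsum : (∑ b ∈ B, ‖f b‖ ^ r) ≤ c ^ r) :
    ∃ A : ℝ → ℂ, IsUpAtomR r A ∧ ∀ x, f x = (c : ℂ) * A x := by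
  have hr0 : r ≠ 0 := by positivity
  -- representation of f via largest breakpoint
  have rep : ∀ x : ℝ, f x = if h : (B.filter (· ≤ x)).Nonempty
      then f ((B.filter (· ≤ x)).max' h) else 0 := by
    intro x
    by_cases h : (B.filter (· ≤ x)).Nonempty
    · rw [dif_pos h]
      have hmem := (B.filter (· ≤ x)).max'_mem h
      rw [Finset.mem_filter] at hmem
      refine H2 _ x hmem.2 (fun b hb hbx => ?_)
      exact Finset.le_max' (B.filter (· ≤ x)) b (Finset.mem_filter.2 ⟨hb, hbx⟩)
    · rw [dif_neg h]
      apply H1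
      intro b hb hbx
      exact h ⟨b, Finset.mem_filter.2 ⟨hb, hbx⟩⟩
  rcases hc.lt_or_eq with hcpos | hczero
  swap
  · -- c = 0 : f vanishes identically
    have hzero : ∀ b ∈ B, f b = 0 := by
      intro b hb
      have h1 : ∀ b' ∈ B, 0 ≤ ‖f b'‖ ^ r := fun b' _ => Real.rpow_nonneg (norm_nonneg _) r
      have h0 : (0:ℝ) ^ r = 0 := Real.zero_rpow hr0
      have : ‖f b‖ ^ r = 0 := by
        have hle : ‖f b‖ ^ r ≤ 0 := by
          have := Finset.single_le_sum h1 hb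
          rw [← hczero, h0] at hsum
          linarith
        linarith [Real.rpow_nonneg (norm_nonneg (f b)) r]
      have : ‖f b‖ = 0 := by
        by_contra hne
        have : 0 < ‖f b‖ := lt_of_le_of_ne (norm_nonneg _) (Ne.symm hne)
        have := Real.rpow_pos_of_pos this r
        linarith
      simpa using this
    have hfz : ∀ x, f x = 0 := by
      intro x
      rw [rep x]
      by_cases h : (B.filter (· ≤ x)).Nonempty
      · rw [dif_pos h]
        have hmem := (B.filter (· ≤ x)).max'_mem h
        rw [Finset.mem_filter] at hmem
        exact hzero _ hmem.1
      · rw [dif_neg h]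
    exact ⟨fun _ => 0, zero_atom hr, fun x => by rw [hfz x]; simp⟩
  rcases B.eq_empty_or_nonempty with hB | hBne
  · subst hB
    have hfz : ∀ x, f x = 0 := fun x => H1 x (by simp)
    exact ⟨fun _ => 0, zero_atom hr, fun x => by rw [hfz x]; simp⟩
  -- main case
  set N := B.card with hN
  have hNpos : 0 < N := Finset.card_pos.2 hBne
  set e := B.orderIsoOfFin (rfl : B.card = N) with he
  set t : ℕ → ℝ := fun j => if h : j < N then (e ⟨j, h⟩ : ℝ) else B.max' hBne + (j + 1 - N : ℕ)
    with ht
  have htlt : ∀ j (h : j < N), t j = (e ⟨j, h⟩ : ℝ) := fun j h => by simp [ht, h]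
  have htmem : ∀ j (h : j < N), t j ∈ B := by
    intro j h
    rw [htlt j h]
    exact (e ⟨j, h⟩).2
  have hsurj : ∀ b ∈ B, ∃ j : ℕ, ∃ h : j < N, t j = b := by
    intro b hb
    refine ⟨(e.symm ⟨b, hb⟩ : Fin N), (e.symm ⟨b, hb⟩).2, ?_⟩
    rw [htlt _ (e.symm ⟨b, hb⟩).2]
    have : e (e.symm ⟨b, hb⟩) = ⟨b, hb⟩ := e.apply_symm_apply _
    rw [show (⟨((e.symm ⟨b, hb⟩ : Fin N) : ℕ), (e.symm ⟨b, hb⟩).2⟩ : Fin N)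
        = e.symm ⟨b, hb⟩ from Fin.ext rfl, this]
  have hmono : StrictMono t := by
    apply strictMono_nat_of_lt_succ
    intro j
    by_cases h1 : j + 1 < N
    · have h0 : j < N := by omega
      rw [htlt j h0, htlt (j+1) h1]
      have : (⟨j, h0⟩ : Fin N) < ⟨j+1, h1⟩ := by simp [Fin.lt_def]
      exact_mod_cast e.strictMono this
    · by_cases h0 : j < N
      · have hj1 : j + 1 = N := by omega
        rw [htlt j h0]
        have hle : (e ⟨j, h0⟩ : ℝ) ≤ B.max' hBne := B.le_max' _ (e ⟨j, h0⟩).2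
        have : t (j+1) = B.max' hBne + ((j + 2 - N : ℕ) : ℝ) := by simp [ht, h1]
        rw [this]
        have : ((j + 2 - N : ℕ) : ℝ) = 1 := by
          rw [show j + 2 - N = 1 by omega]; norm_num
        rw [this]; linarith
      · have h2 : ¬ (j + 1 < N) := h1
        simp only [ht, dif_neg h0, dif_neg h2]
        have : (j + 1 - N : ℕ) < (j + 1 + 1 - N : ℕ) := by omega
        have := (Nat.cast_lt (α := ℝ)).2 this
        linarith
  set A : ℝ → ℂ := fun x => (c : ℂ)⁻¹ * f x with hA
  set φ : ℕ → ℂ := fun j => (c : ℂ)⁻¹ * f (t j) with hφ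
  have hcC : (c : ℂ) ≠ 0 := by exact_mod_cast hcpos.ne'
  refine ⟨A, ⟨N, t, φ, hmono, ?_, ?_⟩, fun x => by
    rw [hA]; dsimp only; rw [mul_inv_cancel_left₀ hcC]⟩
  · -- ℓ^r bound
    have hφn : ∀ j, ‖φ j‖ ^ r = (c⁻¹) ^ r * ‖f (t j)‖ ^ r := by
      intro j
      have h1 : ‖φ j‖ = c⁻¹ * ‖f (t j)‖ := by
        rw [hφ]
        dsimp only
        rw [norm_mul, norm_inv, Complex.norm_real, Real.norm_eq_abs, abs_of_nonneg hc]
      rw [h1, Real.mul_rpow (by positivity) (norm_nonneg _)]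
    have hsum2 : ∑ j ∈ Finset.range N, ‖f (t j)‖ ^ r = ∑ b ∈ B, ‖f b‖ ^ r := by
      apply Finset.sum_bij (fun j hj => t j)
      · intro j hj; exact htmem j (Finset.mem_range.1 hj)
      · intro j hj j' hj' hEq; exact hmono.injective hEq
      · intro b hb
        obtain ⟨j, hj, hjb⟩ := hsurj b hb
        exact ⟨j, Finset.mem_range.2 hj, hjb⟩
      · intro j hj; rfl
    calc ∑ j ∈ Finset.range N, ‖φ j‖ ^ r = (c⁻¹) ^ r * ∑ b ∈ B, ‖f b‖ ^ r := by
          rw [← hsum2, Finset.mul_sum]; exact Finset.sum_congr rfl (fun j _ => hφn j)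
    _ ≤ (c⁻¹) ^ r * c ^ r := by
          apply mul_le_mul_of_nonneg_left hsum (Real.rpow_nonneg (by positivity) r)
    _ = 1 := by
          rw [← Real.mul_rpow (by positivity) hc, inv_mul_cancel₀ hcpos.ne', Real.one_rpow]
  · -- value formula
    intro x
    by_cases hx : t 0 ≤ x
    · set J := (Finset.range N).filter (fun j => t j ≤ x) with hJ
      have hJne : J.Nonempty := ⟨0, Finset.mem_filter.2 ⟨Finset.mem_range.2 hNpos, hx⟩⟩
      set j' := J.max' hJne with hj'
      have hj'mem := J.max'_mem hJne
      rw [Finset.mem_filter, Finset.mem_range] at hj'mem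
      obtain ⟨hj'N, hj'x⟩ := hj'mem
      have hmax : ∀ j, j < N → t j ≤ x → j ≤ j' :=
        fun j hjN hjx => Finset.le_max' _ j (Finset.mem_filter.2 ⟨Finset.mem_range.2 hjN, hjx⟩)
      have hfx : f x = f (t j') := by
        apply H2 (t j') x hj'x
        intro b hb hbx
        obtain ⟨j, hj, rfl⟩ := hsurj b hb
        exact hmono.monotone (hmax j hj hbx)
      have hAval : A x = φ j' := by
        rw [hA, hφ]; dsimp only; rw [hfx]
      rw [hAval]
      rw [Finset.sum_eq_single_of_mem j' (Finset.mem_range.2 hj'N)]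
      · rw [if_pos]
        constructor
        · exact hj'x
        · by_cases hEq : j' + 1 = N
          · exact Or.inl hEq
          · refine Or.inr ?_
            by_contra hcon
            push_neg at hcon
            have : j' + 1 ≤ j' := hmax (j'+1) (by omega) hcon
            omega
      · intro j hjmem hne
        rw [Finset.mem_range] at hjmem
        rw [if_neg]
        rintro ⟨hjx, hjor⟩
        have hjle : j ≤ j' := hmax j hjmem hjx
        have hjlt : j < j' := lt_of_le_of_ne hjle hne
        rcases hjor with hEq | hlt
        · omega
        · have : t (j+1) ≤ t j' := hmono.monotone (by omega)
          linarith
    · -- x before all breakpoints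
      have hzero : ∀ b ∈ B, ¬ b ≤ x := by
        intro b hb hbx
        obtain ⟨j, hj, rfl⟩ := hsurj b hb
        have : t 0 ≤ t j := hmono.monotone (Nat.zero_le j)
        exact hx (le_trans this hbx)
      have : A x = 0 := by rw [hA]; dsimp only; rw [H1 x hzero]; simp
      rw [this]
      symm
      apply Finset.sum_eq_zero
      intro j hjmem
      rw [if_neg]
      rintro ⟨hjx, -⟩
      exact hzero (t j) (htmem j (Finset.mem_range.1 hjmem)) hjx


-- GK SECTION

section gksec
variable (hp : 1 < p) (hbdd : BddAbove (varSumsR p v))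
  (hrc : ∀ x : ℝ, ContinuousWithinAt v (Set.Ici x) x)
  (h0 : Tendsto v atBot (nhds 0)) (hW : 0 < VpNormR p v)

def lvl (p : ℝ) (v : ℝ → ℂ) (k i : ℕ) : ℝ := i * (VpNormR p v ^ p / 2 ^ k)

def brk (p : ℝ) (v : ℝ → ℂ) (k : ℕ) : Finset ℝ :=
  ((Finset.Icc 1 (2 ^ k)).filter
    (fun i => ({ x | lvl p v k i ≤ om p v x }).Nonempty)).image
    (fun i => stp p v (lvl p v k i))

def gk (p : ℝ) (v : ℝ → ℂ) (k : ℕ) (x : ℝ) : ℂ :=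
  if h : (((brk p v k)).filter (· ≤ x)).Nonempty then
    v ((((brk p v k)).filter (· ≤ x)).max' h) else 0

lemma mem_brk {b : ℝ} {k : ℕ} : b ∈ brk p v k ↔ ∃ i, i ∈ Finset.Icc 1 (2 ^ k) ∧
    ({ x | lvl p v k i ≤ om p v x }).Nonempty ∧ b = stp p v (lvl p v k i) := by
  simp only [brk, Finset.mem_image, Finset.mem_filter]
  constructor
  · rintro ⟨i, ⟨h1, h2⟩, h3⟩; exact ⟨i, h1, h2, h3.symm⟩
  · rintro ⟨i, h1, h2, h3⟩; exact ⟨i, ⟨h1, h2⟩, h3.symm⟩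

include hW in
lemma lvl_pos {k i : ℕ} (hi : 1 ≤ i) : 0 < lvl p v k i := by
  have hOm : 0 < VpNormR p v ^ p := Real.rpow_pos_of_pos hW p
  have : (0:ℝ) < 2 ^ k := by positivity
  have hi' : (1:ℝ) ≤ (i:ℝ) := by exact_mod_cast hi
  have := div_pos hOm this
  rw [lvl]; nlinarith

lemma lvl_mono {k : ℕ} {i i' : ℕ} (h : i ≤ i') : lvl p v k i ≤ lvl p v k i' := by
  have : (i:ℝ) ≤ (i':ℝ) := by exact_mod_cast h
  have h2 : (0:ℝ) ≤ VpNormR p v ^ p / 2 ^ k := by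
    apply div_nonneg (Real.rpow_nonneg Vp_nonneg p) (by positivity)
  rw [lvl, lvl]; nlinarith

lemma lvl_succ_eq {k i : ℕ} : lvl p v k i = lvl p v (k+1) (2*i) := by
  rw [lvl, lvl]
  push_cast
  rw [pow_succ]
  field_simp

lemma brk_subset {k : ℕ} : brk p v k ⊆ brk p v (k+1) := by
  intro b hb
  rw [mem_brk] at hb ⊢
  obtain ⟨i, hIcc, hne, rfl⟩ := hb
  rw [Finset.mem_Icc] at hIcc
  refine ⟨2*i, Finset.mem_Icc.2 ⟨by omega, by rw [pow_succ]; omega⟩, ?_, ?_⟩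
  · rw [← lvl_succ_eq]; exact hne
  · rw [← lvl_succ_eq]

lemma brk_card {k : ℕ} : (brk p v k).card ≤ 2 ^ k := by
  refine le_trans Finset.card_image_le (le_trans (Finset.card_filter_le _ _) ?_)
  simp [Nat.card_Icc]

include hp hbdd hrc h0 hW in
lemma gk_err (k : ℕ) (x : ℝ) :
    ‖v x - gk p v k x‖ ^ p ≤ VpNormR p v ^ p / 2 ^ k := by
  have hOmpos : 0 < VpNormR p v ^ p := Real.rpow_pos_of_pos hW p
  have hθb : 0 < VpNormR p v ^ p / 2 ^ k := by positivity
  by_cases hne : ((brk p v k).filter (· ≤ x)).Nonempty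
  · set I := (Finset.Icc 1 (2 ^ k)).filter
      (fun i => ({ y | lvl p v k i ≤ om p v y }).Nonempty ∧ stp p v (lvl p v k i) ≤ x) with hI
    have hIne : I.Nonempty := by
      obtain ⟨b, hb⟩ := hne
      rw [Finset.mem_filter] at hb
      obtain ⟨hbB, hbx⟩ := hb
      rw [mem_brk] at hbB
      obtain ⟨i, hIcc, hSne, rfl⟩ := hbB
      exact ⟨i, Finset.mem_filter.2 ⟨hIcc, hSne, hbx⟩⟩
    have hi'mem := I.max'_mem hIne
    set i' := I.max' hIne with hi'
    rw [hI, Finset.mem_filter] at hi'mem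
    obtain ⟨hIcc', hi'ne, hi'x⟩ := hi'mem
    obtain ⟨hi'1, hi'2⟩ := Finset.mem_Icc.1 hIcc'
    have hmaxI : ∀ i, i ∈ Finset.Icc 1 (2^k) → ({ y | lvl p v k i ≤ om p v y }).Nonempty →
        stp p v (lvl p v k i) ≤ x → i ≤ i' := by
      intro i h1 h2 h3
      exact Finset.le_max' I i (by rw [hI, Finset.mem_filter]; exact ⟨h1, h2, h3⟩)
    have hlvlpos : 0 < lvl p v k i' := lvl_pos hW hi'1
    have hgk : gk p v k x = v (stp p v (lvl p v k i')) := by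
      rw [gk, dif_pos hne]
      congr 1
      apply le_antisymm
      · apply Finset.max'_le
        intro b hb
        rw [Finset.mem_filter] at hb
        obtain ⟨hbB, hbx⟩ := hb
        rw [mem_brk] at hbB
        obtain ⟨i, hIcc, hSne, rfl⟩ := hbB
        have hii : i ≤ i' := hmaxI i hIcc hSne hbx
        exact stp_mono hp hbdd (lvl_pos hW (Finset.mem_Icc.1 hIcc).1) (lvl_mono hii) hi'ne
      · apply Finset.le_max'
        rw [Finset.mem_filter]
        exact ⟨mem_brk.2 ⟨i', Finset.mem_Icc.2 ⟨hi'1, hi'2⟩, hi'ne, rfl⟩, hi'x⟩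
    have homx : om p v x < lvl p v k i' + VpNormR p v ^ p / 2 ^ k := by
      by_cases h2k : i' = 2 ^ k
      · have h1 : om p v x ≤ VpNormR p v ^ p := om_le hp hbdd x
        have h2 : lvl p v k i' = VpNormR p v ^ p := by
          rw [lvl, h2k]
          push_cast
          field_simp
        rw [h2]; linarith
      · have hsucc : i' + 1 ∈ Finset.Icc 1 (2^k) := Finset.mem_Icc.2 ⟨by omega, by omega⟩
        by_contra hcon
        push_neg at hcon
        have hlvl1 : lvl p v k (i'+1) = lvl p v k i' + VpNormR p v ^ p / 2^k := by
          rw [lvl, lvl]; push_cast; ring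
        have hle : lvl p v k (i'+1) ≤ om p v x := by rw [hlvl1]; exact hcon
        have hne1 : ({ y | lvl p v k (i'+1) ≤ om p v y }).Nonempty := ⟨x, hle⟩
        have hstp1 : stp p v (lvl p v k (i'+1)) ≤ x := stp_le hp hbdd (lvl_pos hW (by omega)) hle
        have := hmaxI (i'+1) hsucc hne1 hstp1
        omega
    have hC := lemC hp hbdd hrc hlvlpos hi'ne hi'x
    rw [hgk]
    exact le_trans hC (max_le (by linarith) (le_of_lt hθb))
  · have hgk0 : gk p v k x = 0 := by rw [gk, dif_neg hne]
    rw [hgk0, sub_zero]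
    have h1 := norm_v_le_om hp hbdd h0 x
    have h2 : om p v x < VpNormR p v ^ p / 2 ^ k := by
      by_contra hcon
      push_neg at hcon
      have hlvl : lvl p v k 1 = VpNormR p v ^ p / 2 ^ k := by rw [lvl]; push_cast; ring
      have hle : lvl p v k 1 ≤ om p v x := by rw [hlvl]; exact hcon
      have hne1 : ({ y | lvl p v k 1 ≤ om p v y }).Nonempty := ⟨x, hle⟩
      have hstp : stp p v (lvl p v k 1) ≤ x := stp_le hp hbdd (lvl_pos hW le_rfl) hle
      apply hne
      exact ⟨_, Finset.mem_filter.2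
        ⟨mem_brk.2 ⟨1, Finset.mem_Icc.2 ⟨le_rfl, Nat.one_le_two_pow⟩, hne1, rfl⟩, hstp⟩⟩
    linarith

lemma gk_zero {k : ℕ} {x : ℝ} (h : ∀ b ∈ brk p v k, ¬ b ≤ x) : gk p v k x = 0 := by
  rw [gk, dif_neg]
  rintro ⟨b, hb⟩
  rw [Finset.mem_filter] at hb
  exact h b hb.1 hb.2

lemma gk_const {k : ℕ} {B : Finset ℝ} (hBsub : brk p v k ⊆ B) {x y : ℝ} (hxy : x ≤ y)
    (h : ∀ b ∈ B, b ≤ y → b ≤ x) : gk p v k y = gk p v k x := by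
  have hEq : (brk p v k).filter (· ≤ y) = (brk p v k).filter (· ≤ x) := by
    apply Finset.ext
    intro b
    simp only [Finset.mem_filter]
    constructor
    · rintro ⟨hb, hby⟩; exact ⟨hb, h b (hBsub hb) hby⟩
    · rintro ⟨hb, hbx⟩; exact ⟨hb, le_trans hbx hxy⟩
  simp only [gk, hEq]

include hp hbdd hrc h0 hW in
lemma gk_val_le (k : ℕ) (x : ℝ) :
    ‖gk p v k x‖ ≤ VpNormR p v + (VpNormR p v ^ p / 2 ^ k) ^ p⁻¹ := by
  have h1 := gk_err hp hbdd hrc h0 hW k x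
  have h2 : ‖v x - gk p v k x‖ ≤ (VpNormR p v ^ p / 2 ^ k) ^ p⁻¹ :=
    rpow_root_le hp (norm_nonneg _) h1
  have h3 : ‖gk p v k x‖ - ‖v x‖ ≤ ‖v x - gk p v k x‖ := by
    rw [norm_sub_rev]
    exact norm_sub_norm_le _ _
  have h4 := norm_v_le hp hbdd (v := v) x
  linarith

include hp in
lemma err_eq (k : ℕ) : (VpNormR p v ^ p / 2 ^ k) ^ p⁻¹
    = VpNormR p v * ((((2:ℝ) ^ (p⁻¹))⁻¹) ^ k) := by
  have hp0 : p ≠ 0 := by positivity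
  have hW0 : (0:ℝ) ≤ VpNormR p v := Vp_nonneg
  rw [Real.div_rpow (Real.rpow_nonneg hW0 p) (by positivity : (0:ℝ) ≤ 2 ^ k)]
  rw [Real.rpow_rpow_inv hW0 hp0, div_eq_mul_inv]
  congr 1
  rw [inv_pow]
  congr 1
  rw [← Real.rpow_natCast 2 k, ← Real.rpow_mul (by norm_num : (0:ℝ) ≤ 2), mul_comm,
    Real.rpow_mul (by norm_num : (0:ℝ) ≤ 2), Real.rpow_natCast]

include hp in
lemma sigma_lt_one : (((2:ℝ) ^ (p⁻¹))⁻¹) < 1 := by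
  have h1 : (1:ℝ) < (2:ℝ) ^ (p⁻¹) :=
    (Real.one_lt_rpow_iff_of_pos (by norm_num)).2 (Or.inl ⟨by norm_num, inv_pos.2 (by linarith)⟩)
  exact inv_lt_one_of_one_lt₀ h1

lemma sigma_nonneg : (0:ℝ) ≤ (((2:ℝ) ^ (p⁻¹))⁻¹) := by positivity

include hp hbdd hrc h0 hW in
lemma gk_tendsto (x : ℝ) : Tendsto (fun k => gk p v k x) atTop (nhds (v x)) := by
  rw [tendsto_iff_norm_sub_tendsto_zero]
  apply squeeze_zero (fun k => norm_nonneg _)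
    (g := fun k => VpNormR p v * ((((2:ℝ) ^ (p⁻¹))⁻¹) ^ k))
  · intro k
    rw [norm_sub_rev, ← err_eq hp k]
    exact rpow_root_le hp (norm_nonneg _) (gk_err hp hbdd hrc h0 hW k x)
  · have := (tendsto_pow_atTop_nhds_zero_of_lt_one (sigma_nonneg (p := p))
      (sigma_lt_one hp)).const_mul (VpNormR p v)
    simpa using this

include hp hbdd hrc h0 hW in
lemma dk_norm_le (k : ℕ) (x : ℝ) :
    ‖gk p v (k+1) x - gk p v k x‖ ≤ 2 * (VpNormR p v * ((((2:ℝ) ^ (p⁻¹))⁻¹) ^ k)) := by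
  have e1 : ‖v x - gk p v (k+1) x‖ ≤ (VpNormR p v ^ p / 2 ^ (k+1)) ^ p⁻¹ :=
    rpow_root_le hp (norm_nonneg _) (gk_err hp hbdd hrc h0 hW (k+1) x)
  have e0 : ‖v x - gk p v k x‖ ≤ (VpNormR p v ^ p / 2 ^ k) ^ p⁻¹ :=
    rpow_root_le hp (norm_nonneg _) (gk_err hp hbdd hrc h0 hW k x)
  have hmono : (VpNormR p v ^ p / 2 ^ (k+1)) ^ p⁻¹ ≤ (VpNormR p v ^ p / 2 ^ k) ^ p⁻¹ := by
    apply Real.rpow_le_rpow (by positivity) _ (by positivity)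
    rw [div_eq_mul_inv, div_eq_mul_inv]
    apply mul_le_mul_of_nonneg_left _ (Real.rpow_nonneg Vp_nonneg p)
    apply inv_anti₀ (by positivity)
    have : (0:ℝ) < 2 ^ k := by positivity
    rw [pow_succ]
    nlinarith
  have htri : ‖gk p v (k+1) x - gk p v k x‖ ≤
      ‖v x - gk p v k x‖ + ‖v x - gk p v (k+1) x‖ := by
    have hEq : gk p v (k+1) x - gk p v k x = (v x - gk p v k x) - (v x - gk p v (k+1) x) := by
      ring
    rw [hEq]
    exact norm_sub_le _ _
  rw [← err_eq hp k]
  linarith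

include hp hbdd hrc h0 hW in
lemma g0_atom {r : ℝ} (hr : 1 ≤ r) :
    ∃ A, IsUpAtomR r A ∧ ∀ x, gk p v 0 x = ((2 * VpNormR p v : ℝ) : ℂ) * A x := by
  have hW2 : (0:ℝ) ≤ 2 * VpNormR p v := by
    have := Vp_nonneg (p := p) (v := v); linarith
  apply step_atom hr (brk p v 0) (gk p v 0) hW2
  · intro x hx; exact gk_zero hx
  · intro x y hxy h; exact gk_const (Finset.Subset.refl _) hxy h
  · have hval : ∀ b ∈ brk p v 0, ‖gk p v 0 b‖ ^ r ≤ (2 * VpNormR p v) ^ r := by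
      intro b _
      apply Real.rpow_le_rpow (norm_nonneg _) _ (by positivity)
      have hv := gk_val_le hp hbdd hrc h0 hW 0 b
      have h2 : (VpNormR p v ^ p / 2 ^ 0) ^ p⁻¹ = VpNormR p v := by
        simp only [pow_zero, div_one]
        exact Real.rpow_rpow_inv Vp_nonneg (by positivity)
      rw [h2] at hv
      linarith
    calc ∑ b ∈ brk p v 0, ‖gk p v 0 b‖ ^ r ≤ (brk p v 0).card • (2 * VpNormR p v) ^ r :=
          Finset.sum_le_card_nsmul _ _ _ hval
    _ ≤ (2 * VpNormR p v) ^ r := by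
          have hc := brk_card (p := p) (v := v) (k := 0)
          rw [nsmul_eq_mul]
          have h1 : ((brk p v 0).card : ℝ) ≤ 1 := by exact_mod_cast hc
          nlinarith [Real.rpow_nonneg hW2 r,
            Nat.cast_nonneg (α := ℝ) (brk p v 0).card]

include hp hbdd hrc h0 hW in
lemma dk_atom {r : ℝ} (hr : 1 ≤ r) (k : ℕ) :
    ∃ A, IsUpAtomR r A ∧ ∀ x, gk p v (k+1) x - gk p v k x =
      (((((2:ℝ)^(k+1)) ^ r⁻¹ * (2 * (VpNormR p v ^ p / 2 ^ k) ^ p⁻¹)) : ℝ) : ℂ) * A x := by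
  have hr0 : r ≠ 0 := by positivity
  have hβ0 : (0:ℝ) ≤ 2 * (VpNormR p v ^ p / 2 ^ k) ^ p⁻¹ := by positivity
  apply step_atom hr (brk p v (k+1)) (fun x => gk p v (k+1) x - gk p v k x)
    (mul_nonneg (by positivity) hβ0)
  · intro x hx
    rw [gk_zero hx, gk_zero (fun b hb => hx b (brk_subset hb)), sub_zero]
  · intro x y hxy h
    rw [gk_const (Finset.Subset.refl _) hxy h, gk_const brk_subset hxy h]
  · have hval : ∀ b ∈ brk p v (k+1), ‖gk p v (k+1) b - gk p v k b‖ ^ r ≤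
        (2 * (VpNormR p v ^ p / 2 ^ k) ^ p⁻¹) ^ r := by
      intro b _
      apply Real.rpow_le_rpow (norm_nonneg _) _ (by positivity)
      have := dk_norm_le hp hbdd hrc h0 hW k b
      rw [← err_eq hp k] at this
      exact this
    calc ∑ b ∈ brk p v (k+1), ‖gk p v (k+1) b - gk p v k b‖ ^ r
        ≤ (brk p v (k+1)).card • (2 * (VpNormR p v ^ p / 2 ^ k) ^ p⁻¹) ^ r :=
          Finset.sum_le_card_nsmul _ _ _ hval
    _ ≤ ((2:ℝ)^(k+1)) * (2 * (VpNormR p v ^ p / 2 ^ k) ^ p⁻¹) ^ r := by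
          rw [nsmul_eq_mul]
          apply mul_le_mul_of_nonneg_right _ (Real.rpow_nonneg hβ0 r)
          have hc := brk_card (p := p) (v := v) (k := k+1)
          calc ((brk p v (k+1)).card : ℝ) ≤ ((2^(k+1) : ℕ) : ℝ) := by exact_mod_cast hc
          _ = (2:ℝ)^(k+1) := by push_cast; ring
    _ = (((2:ℝ)^(k+1)) ^ r⁻¹ * (2 * (VpNormR p v ^ p / 2 ^ k) ^ p⁻¹)) ^ r := by
          rw [Real.mul_rpow (Real.rpow_nonneg (by positivity) r⁻¹) hβ0,
            Real.rpow_inv_rpow (by positivity) hr0]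

include hp in
lemma coef_le {r : ℝ} (hr1 : 1 ≤ r) (k : ℕ) :
    ((2:ℝ)^(k+1)) ^ r⁻¹ * (2 * (VpNormR p v ^ p / 2 ^ k) ^ p⁻¹)
      ≤ 4 * VpNormR p v * ((2:ℝ) ^ (r⁻¹) * (((2:ℝ) ^ (p⁻¹))⁻¹)) ^ k := by
  have hW0 : (0:ℝ) ≤ VpNormR p v := Vp_nonneg
  have ha0 : (0:ℝ) < (2:ℝ) ^ (r⁻¹) := Real.rpow_pos_of_pos (by norm_num) _
  have ha2 : (2:ℝ) ^ (r⁻¹) ≤ 2 := by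
    calc (2:ℝ) ^ (r⁻¹) ≤ (2:ℝ) ^ (1:ℝ) := by
          apply Real.rpow_le_rpow_of_exponent_le (by norm_num)
          rw [inv_le_one_iff₀]  -- maybe wrong name
          · right; exact hr1
    _ = 2 := Real.rpow_one 2
  have hσ0 : (0:ℝ) ≤ ((2:ℝ) ^ (p⁻¹))⁻¹ := by positivity
  have e2 : ((2:ℝ)^(k+1)) ^ r⁻¹ = ((2:ℝ) ^ (r⁻¹)) ^ (k+1) := by
    rw [← Real.rpow_natCast 2 (k+1), ← Real.rpow_mul (by norm_num : (0:ℝ) ≤ 2), mul_comm,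
      Real.rpow_mul (by norm_num : (0:ℝ) ≤ 2), Real.rpow_natCast]
  rw [e2, err_eq hp k, mul_pow]
  have hpow0 : (0:ℝ) ≤ ((2:ℝ) ^ (r⁻¹)) ^ k := by positivity
  have hpow1 : (0:ℝ) ≤ (((2:ℝ) ^ (p⁻¹))⁻¹) ^ k := by positivity
  calc ((2:ℝ) ^ (r⁻¹)) ^ (k+1) * (2 * (VpNormR p v * (((2:ℝ) ^ (p⁻¹))⁻¹) ^ k))
      = ((2:ℝ) ^ (r⁻¹) * 2 * VpNormR p v) * (((2:ℝ) ^ (r⁻¹)) ^ k * (((2:ℝ) ^ (p⁻¹))⁻¹) ^ k) := by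
        rw [pow_succ]; ring
  _ ≤ (2 * 2 * VpNormR p v) * (((2:ℝ) ^ (r⁻¹)) ^ k * (((2:ℝ) ^ (p⁻¹))⁻¹) ^ k) := by
        apply mul_le_mul_of_nonneg_right _ (mul_nonneg hpow0 hpow1)
        nlinarith
  _ = 4 * VpNormR p v * (((2:ℝ) ^ (r⁻¹)) ^ k * (((2:ℝ) ^ (p⁻¹))⁻¹) ^ k) := by ring

end gksec



end

end Stmt15

namespace Stmt15

lemma upDecomp_zero_mem {r : ℝ} (hr : 1 ≤ r) : (0:ℝ) ∈ upDecompSumsR r (fun _ => 0) := by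
  refine ⟨fun _ => 0, fun _ => fun _ => 0, fun j => zero_atom hr,
    by simpa using summable_zero, ?_, by simp⟩
  intro x
  simpa using hasSum_zero

lemma upDecomp_nonneg {r : ℝ} {f : ℝ → ℂ} {S : ℝ} (hS : S ∈ upDecompSumsR r f) : 0 ≤ S := by
  obtain ⟨c, A, -, -, -, rfl⟩ := hS
  exact tsum_nonneg (fun j => norm_nonneg _)

lemma upNorm_le {r : ℝ} {f : ℝ → ℂ} {S : ℝ} (hS : S ∈ upDecompSumsR r f) :
    UpNormR r f ≤ S :=
  csInf_le ⟨0, fun _ h => upDecomp_nonneg h⟩ hS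

end Stmt15

open Stmt15 in
/-- **interpolation between `U^p` and `U^q` via `V^p`.**
Let `1 < p < q < ∞`.  There is a constant `C` such that for every right-continuous
`v ∈ V^p` vanishing at `-∞` and every `M > 1` there are `u ∈ U^p` and `w ∈ U^q` with
`v = u + w` and `(1/M) ‖u‖_{U^p} + e^M ‖w‖_{U^q} ≤ C ‖v‖_{V^p}`
(in particular `V^p_{rc} ⊂ U^q`). -/
theorem stmt_15 (p q : ℝ) (hp : 1 < p) (hpq : p < q) :
    ∃ C : ℝ, 0 < C ∧ ∀ (v : ℝ → ℂ) (M : ℝ), 1 < M →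
      (∀ x : ℝ, ContinuousWithinAt v (Set.Ici x) x) →
      Tendsto v atBot (nhds 0) →
      BddAbove (varSumsR p v) →
      ∃ u w : ℝ → ℂ, (∀ x, v x = u x + w x) ∧
        (upDecompSumsR p u).Nonempty ∧ (upDecompSumsR q w).Nonempty ∧
        M⁻¹ * UpNormR p u + Real.exp M * UpNormR q w ≤ C * VpNormR p v := by
  have hq1 : 1 < q := lt_trans hp hpq
  have hp0 : (0:ℝ) < p := by linarith
  have hq0 : (0:ℝ) < q := by linarith
  set α : ℝ := p⁻¹ - q⁻¹ with hα
  have hα0 : 0 < α := by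
    have h1 : q⁻¹ < p⁻¹ := by
      apply inv_strictAnti₀ hp0 hpq
    simp only [hα]; linarith
  set ρ : ℝ := (2:ℝ) ^ (q⁻¹) * (((2:ℝ) ^ (p⁻¹))⁻¹) with hρ
  have hρeq : ρ = (2:ℝ) ^ (-α) := by
    rw [hρ, hα, ← Real.rpow_neg (by norm_num : (0:ℝ) ≤ 2),
      ← Real.rpow_add (by norm_num : (0:ℝ) < 2)]
    congr 1
    ring
  have hρ0 : 0 ≤ ρ := by rw [hρeq]; positivity
  have hρ1 : ρ < 1 := by
    rw [hρeq]
    exact Real.rpow_lt_one_of_one_lt_of_neg (by norm_num) (by linarith)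
  have hlog2 : (0:ℝ) < Real.log 2 := Real.log_pos (by norm_num)
  set L : ℝ := α * Real.log 2 with hL
  have hL0 : 0 < L := mul_pos hα0 hlog2
  set C : ℝ := 4 * (L⁻¹ + 3) + 4 * (1 - ρ)⁻¹ + 1 with hC
  have hC0 : 0 < C := by
    have h1 : 0 < L⁻¹ := inv_pos.2 hL0
    have h2 : 0 < (1 - ρ)⁻¹ := inv_pos.2 (by linarith)
    rw [hC]; linarith
  refine ⟨C, hC0, ?_⟩
  intro v M hM hrc h0 hbdd
  have hW0 : (0:ℝ) ≤ VpNormR p v := Vp_nonneg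
  rcases hW0.lt_or_eq with hW | hW
  swap
  · -- degenerate case : VpNormR = 0, v ≡ 0
    have hv0 : ∀ x, v x = 0 := by
      intro x
      have h1 := om_tail hp hbdd (v := v) x
      have h2 := om_nonneg (p := p) (v := v) x
      rw [← hW, Real.zero_rpow (by positivity : p ≠ 0)] at h1
      have h3 : ‖v x‖ ^ p ≤ 0 := by linarith
      have h4 : ‖v x‖ = 0 := by
        by_contra hne
        have h5 : 0 < ‖v x‖ := lt_of_le_of_ne (norm_nonneg _) (Ne.symm hne)
        have := Real.rpow_pos_of_pos h5 p
        linarith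
      simpa using h4
    refine ⟨fun _ => 0, fun _ => 0, fun x => by rw [hv0 x]; simp, ⟨0, upDecomp_zero_mem hp.le⟩,
      ⟨0, upDecomp_zero_mem hq1.le⟩, ?_⟩
    have hu : UpNormR p (fun _ => (0:ℂ)) = 0 :=
      le_antisymm (upNorm_le (upDecomp_zero_mem hp.le))
        (le_csInf ⟨0, upDecomp_zero_mem hp.le⟩ (fun _ h => upDecomp_nonneg h))
    have hw : UpNormR q (fun _ => (0:ℂ)) = 0 :=
      le_antisymm (upNorm_le (upDecomp_zero_mem hq1.le))
        (le_csInf ⟨0, upDecomp_zero_mem hq1.le⟩ (fun _ h => upDecomp_nonneg h))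
    rw [hu, hw, ← hW]
    simp
  -- main case
  set W := VpNormR p v with hWd
  set K : ℕ := ⌈M / L⌉₊ + 1 with hK
  have hKge : M / L ≤ (K : ℕ) := by
    push_cast [hK]
    have := Nat.le_ceil (M / L)
    linarith
  have hKle : (K : ℝ) ≤ M / L + 2 := by
    push_cast [hK]
    have := Nat.ceil_lt_add_one (show (0:ℝ) ≤ M / L by positivity)
    linarith
  -- atoms
  have hA0 := g0_atom hp hbdd hrc h0 hW hp.le
  obtain ⟨A0, hA0atom, hA0spec⟩ := hA0
  have hdkp : ∀ k : ℕ, ∃ A, IsUpAtomR p A ∧ ∀ x, gk p v (k+1) x - gk p v k x =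
      (((((2:ℝ)^(k+1)) ^ p⁻¹ * (2 * (W ^ p / 2 ^ k) ^ p⁻¹)) : ℝ) : ℂ) * A x :=
    fun k => dk_atom hp hbdd hrc h0 hW hp.le k
  choose Adp hAdp hAdps using hdkp
  have hdkq : ∀ k : ℕ, ∃ A, IsUpAtomR q A ∧ ∀ x, gk p v (k+1) x - gk p v k x =
      (((((2:ℝ)^(k+1)) ^ q⁻¹ * (2 * (W ^ p / 2 ^ k) ^ p⁻¹)) : ℝ) : ℂ) * A x :=
    fun k => dk_atom hp hbdd hrc h0 hW hq1.le k
  choose Adq hAdq hAdqs using hdkq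
  set cfp : ℕ → ℝ := fun k => ((2:ℝ)^(k+1)) ^ p⁻¹ * (2 * (W ^ p / 2 ^ k) ^ p⁻¹) with hcfp
  set cfq : ℕ → ℝ := fun k => ((2:ℝ)^(k+1)) ^ q⁻¹ * (2 * (W ^ p / 2 ^ k) ^ p⁻¹) with hcfq
  have hcfp0 : ∀ k, 0 ≤ cfp k := by intro k; rw [hcfp]; positivity
  have hcfq0 : ∀ k, 0 ≤ cfq k := by intro k; rw [hcfq]; positivity
  have hcfple : ∀ k, cfp k ≤ 4 * W := by
    intro k
    have := coef_le (v := v) hp hp.le k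
    rw [mul_inv_cancel₀ (Real.rpow_pos_of_pos (by norm_num : (0:ℝ) < 2) p⁻¹).ne',
      one_pow, mul_one] at this
    exact this
  have hcfqle : ∀ k, cfq k ≤ 4 * W * ρ ^ k := coef_le (v := v) hp hq1.le
  -- the two pieces
  set u : ℝ → ℂ := gk p v K with hu
  set w : ℝ → ℂ := fun x => v x - gk p v K x with hw
  -- u decomposition
  set cu : ℕ → ℂ := fun j => if j = 0 then ((2 * W : ℝ) : ℂ)
    else if j ≤ K then ((cfp (j-1) : ℝ) : ℂ) else 0 with hcu
  set Au : ℕ → ℝ → ℂ := fun j => if j = 0 then A0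
    else if j ≤ K then Adp (j-1) else (fun _ => 0) with hAu
  have hAuatom : ∀ j, IsUpAtomR p (Au j) := by
    intro j
    rw [hAu]
    by_cases h1 : j = 0
    · simp only [h1, if_pos]; exact hA0atom
    · by_cases h2 : j ≤ K
      · simp only [if_neg h1, if_pos h2]; exact hAdp (j-1)
      · simp only [if_neg h1, if_neg h2]; exact zero_atom hp.le
  have hcuzero : ∀ j ∉ Finset.range (K+1), cu j = 0 := by
    intro j hj
    rw [Finset.mem_range] at hj
    have h1 : j ≠ 0 := by omega
    have h2 : ¬ (j ≤ K) := by omega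
    rw [hcu]; simp only [if_neg h1, if_neg h2]
  have hterm_u : ∀ x, ∀ i < K, cu (i+1) * Au (i+1) x = gk p v (i+1) x - gk p v i x := by
    intro x i hi
    have h1 : (i+1) ≠ 0 := by omega
    have h2 : i + 1 ≤ K := by omega
    rw [hcu, hAu]
    simp only [if_neg h1, if_pos h2, Nat.add_sub_cancel]
    exact (hAdps i x).symm
  have hterm_u0 : ∀ x, cu 0 * Au 0 x = gk p v 0 x := by
    intro x
    rw [hcu, hAu]
    simp only [if_pos rfl]
    exact (hA0spec x).symm
  have husum : ∀ x, HasSum (fun j => cu j * Au j x) (u x) := by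
    intro x
    have hz : ∀ j ∉ Finset.range (K+1), cu j * Au j x = 0 := by
      intro j hj
      rw [hcuzero j hj, zero_mul]
    have hhs : HasSum (fun j => cu j * Au j x) (∑ j ∈ Finset.range (K+1), cu j * Au j x) :=
      hasSum_sum_of_ne_finset_zero hz
    have hsum_eq : ∑ j ∈ Finset.range (K+1), cu j * Au j x = u x := by
      rw [Finset.sum_range_succ']
      have he : ∀ i ∈ Finset.range K, cu (i+1) * Au (i+1) x
          = gk p v (i+1) x - gk p v i x := fun i hi => hterm_u x i (Finset.mem_range.1 hi)
      rw [Finset.sum_congr rfl he, Finset.sum_range_sub (fun i => gk p v i x), hterm_u0 x]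
      rw [hu]
      ring
    rwa [hsum_eq] at hhs
  have hcun : ∀ j, ‖cu j‖ ≤ 4 * W := by
    intro j
    rw [hcu]
    by_cases h1 : j = 0
    · simp only [h1, if_pos]
      rw [Complex.norm_real, Real.norm_eq_abs, abs_of_nonneg (by linarith)]
      linarith
    · by_cases h2 : j ≤ K
      · simp only [if_neg h1, if_pos h2]
        rw [Complex.norm_real, Real.norm_eq_abs, abs_of_nonneg (hcfp0 _)]
        exact hcfple _
      · simp only [if_neg h1, if_neg h2]
        rw [norm_zero]
        linarith
  have hcusummable : Summable (fun j => ‖cu j‖) :=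
    summable_of_ne_finset_zero (s := Finset.range (K+1))
      (fun j hj => by rw [hcuzero j hj, norm_zero])
  have humem : (∑' j, ‖cu j‖) ∈ upDecompSumsR p u :=
    ⟨cu, Au, hAuatom, hcusummable, husum, rfl⟩
  have huval : ∑' j, ‖cu j‖ ≤ (K + 1 : ℝ) * (4 * W) := by
    rw [tsum_eq_sum (s := Finset.range (K+1))
      (fun j hj => by rw [hcuzero j hj, norm_zero])]
    calc ∑ j ∈ Finset.range (K+1), ‖cu j‖ ≤ (Finset.range (K+1)).card • (4*W) :=
          Finset.sum_le_card_nsmul _ _ _ (fun j _ => hcun j)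
    _ = (K + 1 : ℝ) * (4 * W) := by
          rw [Finset.card_range, nsmul_eq_mul]
          push_cast
          ring
  -- w decomposition
  set cw : ℕ → ℂ := fun j => ((cfq (K+j) : ℝ) : ℂ) with hcw
  have hcwn : ∀ j, ‖cw j‖ = cfq (K+j) := by
    intro j
    rw [hcw, Complex.norm_real, Real.norm_eq_abs, abs_of_nonneg (hcfq0 _)]
  have hcwle : ∀ j, ‖cw j‖ ≤ (4 * W * ρ ^ K) * ρ ^ j := by
    intro j
    rw [hcwn j]
    calc cfq (K+j) ≤ 4 * W * ρ ^ (K+j) := hcfqle (K+j)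
    _ = (4 * W * ρ ^ K) * ρ ^ j := by rw [pow_add]; ring
  have hgeo : Summable (fun j : ℕ => (4 * W * ρ ^ K) * ρ ^ j) :=
    (summable_geometric_of_lt_one hρ0 hρ1).mul_left _
  have hcwsummable : Summable (fun j => ‖cw j‖) :=
    Summable.of_nonneg_of_le (fun j => norm_nonneg _) hcwle hgeo
  have hwsum : ∀ x, HasSum (fun j => cw j * Adq (K+j) x) (w x) := by
    intro x
    have hterm : ∀ j, cw j * Adq (K+j) x = gk p v (K+j+1) x - gk p v (K+j) x := by
      intro j
      exact (hAdqs (K+j) x).symm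
    have hnorm : ∀ j, ‖cw j * Adq (K+j) x‖ ≤
        2 * (W * ((((2:ℝ) ^ (p⁻¹))⁻¹) ^ K) * ((((2:ℝ) ^ (p⁻¹))⁻¹) ^ j)) := by
      intro j
      rw [hterm j]
      have := dk_norm_le hp hbdd hrc h0 hW (K+j) x
      calc ‖gk p v (K+j+1) x - gk p v (K+j) x‖
          ≤ 2 * (W * ((((2:ℝ) ^ (p⁻¹))⁻¹) ^ (K+j))) := this
      _ = 2 * (W * ((((2:ℝ) ^ (p⁻¹))⁻¹) ^ K) * ((((2:ℝ) ^ (p⁻¹))⁻¹) ^ j)) := by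
            rw [pow_add]; ring
    have hgs : Summable (fun j : ℕ =>
        2 * (W * ((((2:ℝ) ^ (p⁻¹))⁻¹) ^ K) * ((((2:ℝ) ^ (p⁻¹))⁻¹) ^ j))) :=
      ((summable_geometric_of_lt_one (sigma_nonneg (p := p))
        (sigma_lt_one hp)).mul_left (W * ((((2:ℝ) ^ (p⁻¹))⁻¹) ^ K))).mul_left 2
    have hsummable : Summable (fun j => cw j * Adq (K+j) x) :=
      Summable.of_norm_bounded hgs hnorm
    have hpart : ∀ n : ℕ, ∑ j ∈ Finset.range n, (cw j * Adq (K+j) x)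
        = gk p v (K+n) x - gk p v K x := by
      intro n
      have he : ∀ j ∈ Finset.range n, cw j * Adq (K+j) x
          = gk p v (K+j+1) x - gk p v (K+j) x := fun j _ => hterm j
      rw [Finset.sum_congr rfl he]
      exact Finset.sum_range_sub (fun j => gk p v (K+j) x) n
    have hlim : Tendsto (fun n => gk p v (K+n) x - gk p v K x) atTop (nhds (w x)) := by
      rw [hw]
      apply Tendsto.sub_const
      have hcomp : Tendsto (fun n : ℕ => K + n) atTop atTop := by
        simpa [Nat.add_comm] using tendsto_add_atTop_nat K
      exact (gk_tendsto hp hbdd hrc h0 hW x).comp hcomp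
    have htend := hsummable.hasSum.tendsto_sum_nat
    have heq : (fun n => ∑ j ∈ Finset.range n, (cw j * Adq (K+j) x))
        = fun n => gk p v (K+n) x - gk p v K x := funext hpart
    rw [heq] at htend
    have : ∑' j, cw j * Adq (K+j) x = w x := tendsto_nhds_unique htend hlim
    rw [← this]
    exact hsummable.hasSum
  have hwmem : (∑' j, ‖cw j‖) ∈ upDecompSumsR q w :=
    ⟨cw, fun j => Adq (K+j), fun j => hAdq (K+j), hcwsummable, hwsum, rfl⟩
  have hwval : ∑' j, ‖cw j‖ ≤ (4 * W * ρ ^ K) * (1 - ρ)⁻¹ := by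
    calc ∑' j, ‖cw j‖ ≤ ∑' j, (4 * W * ρ ^ K) * ρ ^ j :=
          Summable.tsum_le_tsum hcwle hcwsummable hgeo
    _ = (4 * W * ρ ^ K) * ∑' j, ρ ^ j := tsum_mul_left
    _ = (4 * W * ρ ^ K) * (1 - ρ)⁻¹ := by rw [tsum_geometric_of_lt_one hρ0 hρ1]
  -- final estimate
  refine ⟨u, w, fun x => by rw [hu, hw]; ring, ⟨_, humem⟩, ⟨_, hwmem⟩, ?_⟩
  have hun := upNorm_le humem
  have hwn := upNorm_le hwmem
  have huge0 : 0 ≤ UpNormR p u := le_csInf ⟨_, humem⟩ (fun _ h => upDecomp_nonneg h)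
  have hwge0 : 0 ≤ UpNormR q w := le_csInf ⟨_, hwmem⟩ (fun _ h => upDecomp_nonneg h)
  have hM0 : (0:ℝ) < M := by linarith
  have hMinv : (0:ℝ) < M⁻¹ := inv_pos.2 hM0
  have hexp : (0:ℝ) < Real.exp M := Real.exp_pos M
  -- bound for the u part
  have hu1 : M⁻¹ * UpNormR p u ≤ 4 * (L⁻¹ + 3) * W := by
    have h1 : M⁻¹ * UpNormR p u ≤ M⁻¹ * ((K + 1 : ℝ) * (4 * W)) := by
      apply mul_le_mul_of_nonneg_left (le_trans hun huval) hMinv.le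
    have h2 : (K + 1 : ℝ) ≤ M / L + 3 := by linarith
    have h3 : M⁻¹ * ((K + 1 : ℝ) * (4 * W)) ≤ M⁻¹ * ((M / L + 3) * (4 * W)) := by
      apply mul_le_mul_of_nonneg_left _ hMinv.le
      apply mul_le_mul_of_nonneg_right h2 (by linarith)
    have h4 : M⁻¹ * ((M / L + 3) * (4 * W)) ≤ 4 * (L⁻¹ + 3) * W := by
      rw [div_eq_mul_inv]
      have hM1 : M⁻¹ ≤ 1 := by
        rw [inv_le_one_iff₀]
        right; linarith
      have hMM : M⁻¹ * M = 1 := inv_mul_cancel₀ hM0.ne'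
      have hexpand : M⁻¹ * ((M * L⁻¹ + 3) * (4 * W)) =
          (M⁻¹ * M) * L⁻¹ * (4 * W) + M⁻¹ * 3 * (4 * W) := by ring
      rw [hexpand, hMM]
      have h34W : (0:ℝ) ≤ 3 * (4 * W) := by nlinarith
      have h5 : M⁻¹ * 3 * (4 * W) ≤ 3 * (4 * W) := by
        calc M⁻¹ * 3 * (4 * W) = M⁻¹ * (3 * (4 * W)) := by ring
        _ ≤ 1 * (3 * (4 * W)) := mul_le_mul_of_nonneg_right hM1 h34W
        _ = 3 * (4 * W) := by ring
      have h6 : (1:ℝ) * L⁻¹ * (4 * W) + 3 * (4 * W) = 4 * (L⁻¹ + 3) * W := by ring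
      linarith
    linarith
  -- bound for the w part
  have hw1 : Real.exp M * UpNormR q w ≤ 4 * (1 - ρ)⁻¹ * W := by
    have h1 : Real.exp M * UpNormR q w ≤ Real.exp M * ((4 * W * ρ ^ K) * (1 - ρ)⁻¹) :=
      mul_le_mul_of_nonneg_left (le_trans hwn hwval) hexp.le
    have hρK : Real.exp M * ρ ^ K ≤ 1 := by
      have hρexp : ρ = Real.exp (-L) := by
        rw [hρeq, Real.rpow_def_of_pos (by norm_num : (0:ℝ) < 2), hL]
        congr 1
        ring
      rw [hρexp, ← Real.exp_nat_mul, ← Real.exp_add]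
      have hKL : M ≤ (K:ℝ) * L := by
        rw [div_le_iff₀ hL0] at hKge
        linarith
      have hrw : (K:ℝ) * (-L) = -((K:ℝ) * L) := by ring
      have : M + (K:ℝ) * (-L) ≤ 0 := by rw [hrw]; linarith
      calc Real.exp (M + (K:ℝ) * (-L)) ≤ Real.exp 0 := Real.exp_le_exp.2 this
      _ = 1 := Real.exp_zero
    have h2 : Real.exp M * ((4 * W * ρ ^ K) * (1 - ρ)⁻¹)
        = (Real.exp M * ρ ^ K) * (4 * W * (1 - ρ)⁻¹) := by ring
    have h3 : (Real.exp M * ρ ^ K) * (4 * W * (1 - ρ)⁻¹) ≤ 1 * (4 * W * (1 - ρ)⁻¹) := by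
      apply mul_le_mul_of_nonneg_right hρK
      have : 0 < (1 - ρ)⁻¹ := inv_pos.2 (by linarith)
      positivity
    rw [h2] at h1
    calc Real.exp M * UpNormR q w ≤ 1 * (4 * W * (1 - ρ)⁻¹) := le_trans h1 h3
    _ = 4 * (1 - ρ)⁻¹ * W := by ring
  calc M⁻¹ * UpNormR p u + Real.exp M * UpNormR q w
      ≤ 4 * (L⁻¹ + 3) * W + 4 * (1 - ρ)⁻¹ * W := by linarith
  _ ≤ C * W := by
      have hCW : (4 * (L⁻¹ + 3) + 4 * (1 - ρ)⁻¹ + 1) * W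
          = 4 * (L⁻¹ + 3) * W + 4 * (1 - ρ)⁻¹ * W + W := by ring
      rw [hC, hCW]
      linarith
end
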